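/- arXiv:2311.14364 — 2 statements merged into one kernel-verified Lean document; each statement's English description precedes it below -/
import Mathlib

section
/- Let f : X → ℝ be a filter on a Lefschetz complex with n = |BD(f)| birth-death pairs, and let Α : {1,…,n} → BD(f) be the bijection that orders the birth-death pairs by strictly decreasing filter value of their birth-giving cells. Then Α is a shallow order of f. -/
attribute [local instance] Classical.propDecidable

/-- A Lefschetz complex over an ambient finite type `C` of potential cells:
a finite set `cells` of cells, a dimension function, and a mod-2 incidence
function `bd` supported on `cells`, with `bd x y ≠ 0` only if
`dim y = dim x + 1`, and `∂∘∂ = 0` mod 2. -/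
structure LC (C : Type) [Fintype C] [DecidableEq C] : Type where
  cells : Finset C
  dim : C → ℤ
  bd : C → C → ZMod 2
  bd_mem : ∀ x y, bd x y ≠ 0 → x ∈ cells ∧ y ∈ cells
  bd_dim : ∀ x y, bd x y ≠ 0 → dim y = dim x + 1
  bd_sq : ∀ x z, ∑ y, bd x y * bd y z = 0

variable {C : Type} [Fintype C] [DecidableEq C]

/-- A filter on a Lefschetz complex: injective on the cells, and increasing
along the facet relation. -/
def IsFilter (L : LC C) (f : C → ℝ) : Prop :=
  (∀ x ∈ L.cells, ∀ y ∈ L.cells, f x = f y → x = y) ∧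
  ∀ x y, L.bd x y ≠ 0 → f x < f y

lemma LC.bd_self (L : LC C) (a : C) : L.bd a a = 0 := by
  by_contra h
  have := L.bd_dim a a h
  omega

/-- The boundary map of the quotient after canceling `(s,t)`:
`∂'(x,y) = ∂(x,y) + ∂(s,y)·∂(x,t)` on the remaining cells, `0` elsewhere. -/
def cancelBd (L : LC C) (s t : C) : C → C → ZMod 2 := fun x y =>
  if x ∈ L.cells \ {s, t} ∧ y ∈ L.cells \ {s, t} then
    L.bd x y + L.bd s y * L.bd x t
  else 0

private lemma zmod2_add_self : ∀ a : ZMod 2, a + a = 0 := by decide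

/-- The quotient Lefschetz complex after canceling the facet-cofacet pair `(s,t)`. -/
noncomputable def cancel (L : LC C) (s t : C) : LC C :=
  if hst : L.bd s t = 1 then
    { cells := L.cells \ {s, t}
      dim := L.dim
      bd := cancelBd L s t
      bd_mem := by
        intro x y h
        unfold cancelBd at h
        split_ifs at h with hc
        · exact hc
        · exact absurd rfl h
      bd_dim := by
        intro x y h
        unfold cancelBd at h
        split_ifs at h with hc
        · by_cases hxy : L.bd x y = 0
          · rw [hxy, zero_add] at h
            have h1 : L.bd s y ≠ 0 := fun hz => by simp [hz] at h
            have h2 : L.bd x t ≠ 0 := fun hz => by simp [hz] at h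
            have d1 := L.bd_dim s y h1
            have d2 := L.bd_dim x t h2
            have d3 := L.bd_dim s t (by simp [hst])
            omega
          · exact L.bd_dim x y hxy
        · exact absurd rfl h
      bd_sq := by
        intro x z
        by_cases hx : x ∈ L.cells \ {s, t}
        swap
        · refine Finset.sum_eq_zero fun y _ => ?_
          unfold cancelBd
          rw [if_neg (fun hc => hx hc.1), zero_mul]
        by_cases hz : z ∈ L.cells \ {s, t}
        swap
        · refine Finset.sum_eq_zero fun y _ => ?_
          have h0 : cancelBd L s t y z = 0 := by
            unfold cancelBd; rw [if_neg (fun hc => hz hc.2)]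
          rw [h0, mul_zero]
        have key : ∀ y, cancelBd L s t x y * cancelBd L s t y z =
            (L.bd x y + L.bd s y * L.bd x t) * (L.bd y z + L.bd s z * L.bd y t) := by
          intro y
          by_cases hy : y ∈ L.cells \ {s, t}
          · unfold cancelBd
            rw [if_pos ⟨hx, hy⟩, if_pos ⟨hy, hz⟩]
          · have lhs0 : cancelBd L s t x y = 0 := by
              unfold cancelBd; rw [if_neg (fun hc => hy hc.2)]
            rw [lhs0, zero_mul]
            by_cases hyc : y ∈ L.cells
            · have hyst : y = s ∨ y = t := by
                simp only [Finset.mem_sdiff, Finset.mem_insert, Finset.mem_singleton] at hy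
                tauto
              rcases hyst with rfl | rfl
              · simp [L.bd_self, hst, zmod2_add_self]
              · simp [L.bd_self, hst, zmod2_add_self]
            · have b1 : L.bd x y = 0 := by
                by_contra hb; exact hyc (L.bd_mem x y hb).2
              have b2 : L.bd s y = 0 := by
                by_contra hb; exact hyc (L.bd_mem s y hb).2
              have b3 : L.bd y z = 0 := by
                by_contra hb; exact hyc (L.bd_mem y z hb).1
              have b4 : L.bd y t = 0 := by
                by_contra hb; exact hyc (L.bd_mem y t hb).1
              rw [b1, b2, b3, b4]
              ring
        rw [Finset.sum_congr rfl fun y _ => key y]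
        have expand : ∀ y : C,
            (L.bd x y + L.bd s y * L.bd x t) * (L.bd y z + L.bd s z * L.bd y t) =
            L.bd x y * L.bd y z + L.bd s z * (L.bd x y * L.bd y t)
              + L.bd x t * (L.bd s y * L.bd y z)
              + L.bd x t * L.bd s z * (L.bd s y * L.bd y t) := by
          intro y; ring
        rw [Finset.sum_congr rfl fun y _ => expand y]
        simp only [Finset.sum_add_distrib, ← Finset.mul_sum, L.bd_sq, mul_zero,
          add_zero, zero_add] }
  else L

/-- The boundary operator on mod-2 chains. -/
noncomputable def bdOp (L : LC C) : (C → ZMod 2) →ₗ[ZMod 2] (C → ZMod 2) where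
  toFun c := fun x => ∑ y, L.bd x y * c y
  map_add' a b := by
    funext x
    simp [mul_add, Finset.sum_add_distrib]
  map_smul' m a := by
    funext x
    simp only [Pi.smul_apply, smul_eq_mul, RingHom.id_apply]
    rw [Finset.mul_sum]
    exact Finset.sum_congr rfl fun y _ => by ring

/-- The `p`-chains of a Lefschetz complex: mod-2 chains supported on cells of
dimension `p`. -/
def chains (L : LC C) (p : ℤ) : Submodule (ZMod 2) (C → ZMod 2) where
  carrier := {c | ∀ x, c x ≠ 0 → x ∈ L.cells ∧ L.dim x = p}
  zero_mem' := by intro x hx; simp at hx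
  add_mem' := by
    intro a b ha hb x hx
    by_cases h1 : a x = 0
    · refine hb x fun h2 => hx ?_
      show a x + b x = 0
      rw [h1, h2, add_zero]
    · exact ha x h1
  smul_mem' := by
    intro m c hc x hx
    refine hc x fun h0 => hx ?_
    show m * c x = 0
    rw [h0, mul_zero]

/-- The `p`-cycles. -/
noncomputable def cycles (L : LC C) (p : ℤ) : Submodule (ZMod 2) (C → ZMod 2) :=
  chains L p ⊓ LinearMap.ker (bdOp L)

/-- The `p`-boundaries. -/
noncomputable def boundaries (L : LC C) (p : ℤ) : Submodule (ZMod 2) (C → ZMod 2) :=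
  Submodule.map (bdOp L) (chains L (p + 1))

/-- The mod-2 homology of a Lefschetz complex in dimension `p`. -/
noncomputable def homology (L : LC C) (p : ℤ) : Type :=
  cycles L p ⧸ (Submodule.comap (cycles L p).subtype (boundaries L p))

noncomputable instance (L : LC C) (p : ℤ) : AddCommGroup (homology L p) :=
  inferInstanceAs (AddCommGroup (cycles L p ⧸
    Submodule.comap (cycles L p).subtype (boundaries L p)))

noncomputable instance (L : LC C) (p : ℤ) : Module (ZMod 2) (homology L p) :=
  inferInstanceAs (Module (ZMod 2) (cycles L p ⧸
    Submodule.comap (cycles L p).subtype (boundaries L p)))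

/-- The boundary of the cell `y`, as a chain. -/
def col (L : LC C) (y : C) : C → ZMod 2 := fun x => L.bd x y

/-- The chain `v` is the boundary of a chain supported on cells with filter
value `< b`. -/
def IsBdryBelow (L : LC C) (f : C → ℝ) (b : ℝ) (v : C → ZMod 2) : Prop :=
  ∃ c : C → ZMod 2, (∀ z, c z ≠ 0 → z ∈ L.cells ∧ f z < b) ∧ bdOp L c = v

/-- The cell `y` gives death: `[∂y] ≠ 0` in the homology of the sublevel set
strictly below `f y`. -/
def givesDeath (L : LC C) (f : C → ℝ) (y : C) : Prop :=
  y ∈ L.cells ∧ ¬ IsBdryBelow L f (f y) (col L y)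

/-- The cell `y` gives birth: `[∂y] = 0` in the homology of the sublevel set
strictly below `f y`. -/
def givesBirth (L : LC C) (f : C → ℝ) (y : C) : Prop :=
  y ∈ L.cells ∧ IsBdryBelow L f (f y) (col L y)

/-- The unique chain supported on death-giving cells below `y` whose boundary
is `∂y` (for birth-giving `y`); junk value otherwise. -/
noncomputable def canChain (L : LC C) (f : C → ℝ) (y : C) : C → ZMod 2 :=
  if h : ∃ c : C → ZMod 2,
      (∀ z, c z ≠ 0 → f z < f y ∧ givesDeath L f z) ∧ bdOp L c = col L y
  then h.choose else 0

/-- The canonical cycle `d_y = y + c_y` of a birth-giving cell `y`. -/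
noncomputable def canCycle (L : LC C) (f : C → ℝ) (y : C) : C → ZMod 2 :=
  Pi.single y 1 + canChain L f y

/-- `v` and `w` are homologous in the sublevel complex strictly below `b`. -/
def HomBelow (L : LC C) (f : C → ℝ) (b : ℝ) (v w : C → ZMod 2) : Prop :=
  ∃ c : C → ZMod 2, (∀ z, c z ≠ 0 → z ∈ L.cells ∧ f z < b) ∧ bdOp L c = v + w

/-- Sorting a finset of cells by increasing filter value (fueled recursion). -/
noncomputable def sortAux (f : C → ℝ) : ℕ → Finset C → List C
  | 0, _ => []
  | n + 1, S =>
    if h : S.Nonempty then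
      let m := (Finset.exists_min_image S f h).choose
      m :: sortAux f n (S.erase m)
    else []

/-- The cells of `L` listed in increasing order of filter value. -/
noncomputable def sortedCells (L : LC C) (f : C → ℝ) : List C :=
  sortAux f L.cells.card L.cells

/-- An element of `S` maximizing `f`, with default value. -/
noncomputable def maxCellD (f : C → ℝ) (S : Finset C) (dflt : C) : C :=
  if h : S.Nonempty then (Finset.exists_max_image S f h).choose else dflt

/-- One step of the persistence pairing algorithm: the state is the pair
(unpaired birth-giving cells, birth-death pairs found so far), and `y` is the
next cell in the filter order.  If `y` gives birth it is added to the unpaired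
set; if `y` gives death, the unique subset `A` of the unpaired cells whose
canonical cycles sum to a cycle homologous to `∂y` below `y` is found, and `y`
is paired with the cell of `A` of maximal filter value. -/
noncomputable def pairStep (L : LC C) (f : C → ℝ) (st : Finset C × Finset (C × C))
    (y : C) : Finset C × Finset (C × C) :=
  if givesBirth L f y then (insert y st.1, st.2)
  else
    let A : Finset C :=
      if h : ∃! A : Finset C, A ⊆ st.1 ∧
          HomBelow L f (f y) (∑ x ∈ A, canCycle L f x) (col L y)
      then h.exists.choose else ∅
    let s := maxCellD f A y
    (st.1.erase s, insert (s, y) st.2)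

/-- The state of the persistence pairing after processing all cells. -/
noncomputable def pairState (L : LC C) (f : C → ℝ) : Finset C × Finset (C × C) :=
  (sortedCells L f).foldl (pairStep L f) (∅, ∅)

/-- The birth-death pairs `BD(f)` of the filter `f`. -/
noncomputable def BD (L : LC C) (f : C → ℝ) : Finset (C × C) :=
  (pairState L f).2

/-- The state of the persistence pairing after processing the cells with
filter value `< b`. -/
noncomputable def stateBelow (L : LC C) (f : C → ℝ) (b : ℝ) :
    Finset C × Finset (C × C) :=
  ((sortedCells L f).filter (fun x => decide (f x < b))).foldl (pairStep L f) (∅, ∅)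

/-- The birth-giving cells with value `< b` that are unpaired by the
persistence pairing restricted to the sublevel set below `b`. -/
noncomputable def unpairedBelow (L : LC C) (f : C → ℝ) (b : ℝ) : Finset C :=
  (stateBelow L f b).1

/-- `(s,t)` is a shallow pair: `s` is the facet of `t` with maximal filter
value and `t` is the cofacet of `s` with minimal filter value. -/
def IsShallow (L : LC C) (f : C → ℝ) (s t : C) : Prop :=
  L.bd s t = 1 ∧ (∀ x, L.bd x t ≠ 0 → f x ≤ f s) ∧ (∀ y, L.bd s y ≠ 0 → f t ≤ f y)

/-- Cancel a list of pairs in sequence. -/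
noncomputable def cancelList : LC C → List (C × C) → LC C
  | L, [] => L
  | L, p :: ps => cancelList (cancel L p.1 p.2) ps

/-- The quotient after canceling the first `k` pairs of the sequence `Φ`. -/
noncomputable def quotAt (L : LC C) {n : ℕ} (Φ : Fin n → C × C) (k : ℕ) : LC C :=
  cancelList L ((List.ofFn Φ).take k)

/-- `Φ` is a shallow order: an enumeration of the birth-death pairs of `f`
such that each pair is shallow for the quotient obtained by canceling all
preceding pairs. -/
def IsShallowOrder (L : LC C) (f : C → ℝ) {n : ℕ} (Φ : Fin n → C × C) : Prop :=
  Function.Injective Φ ∧ (∀ i, Φ i ∈ BD L f) ∧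
  ∀ i : Fin n, IsShallow (quotAt L Φ i) f (Φ i).1 (Φ i).2

/-- The depth poset: the intersection of the strict total orders induced on
`BD(f)` by all shallow orders. -/
def DepthRel (L : LC C) (f : C → ℝ) (φ ψ : C × C) : Prop :=
  φ ∈ BD L f ∧ ψ ∈ BD L f ∧
  ∀ Φ : Fin (BD L f).card → C × C, IsShallowOrder L f Φ →
    ∀ i j : Fin (BD L f).card, Φ i = φ → Φ j = ψ → i < j

/-- The rank of the lower-left minor of the ordered boundary matrix with rows
the cells of filter value `≥ a` and columns the cells of filter value `≤ b`. -/
noncomputable def llRank (L : LC C) (f : C → ℝ) (a b : ℝ) : ℕ :=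
  Matrix.rank (Matrix.of fun (x : {x : C // x ∈ L.cells ∧ a ≤ f x})
    (y : {y : C // y ∈ L.cells ∧ f y ≤ b}) => L.bd x.1 y.1)

/-- `Φ` and `Ψ` differ by transposing two adjacent positions. -/
def AdjSwap {n : ℕ} (Φ Ψ : Fin n → C × C) : Prop :=
  ∃ (k : Fin n) (hk : (k : ℕ) + 1 < n),
    Ψ k = Φ ⟨k + 1, hk⟩ ∧ Ψ ⟨k + 1, hk⟩ = Φ k ∧
    ∀ i : Fin n, i ≠ k → i ≠ ⟨k + 1, hk⟩ → Ψ i = Φ i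
namespace SP

variable {C : Type} [Fintype C] [DecidableEq C]

lemma z2 : ∀ a : ZMod 2, a = 0 ∨ a = 1 := by decide

lemma z2add : ∀ a : ZMod 2, a + a = 0 := by decide

lemma fun2add (w : C → ZMod 2) : w + w = 0 := by
  funext y; exact z2add (w y)

lemma sum_symmDiff' {α M : Type*} [DecidableEq α] [AddCommMonoid M]
    (h2 : ∀ m : M, m + m = 0) (A B : Finset α) (g : α → M) :
    ∑ x ∈ symmDiff A B, g x = (∑ x ∈ A, g x) + ∑ x ∈ B, g x := by
  have hu : (∑ x ∈ A ∪ B, g x) + ∑ x ∈ A ∩ B, g x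
      = (∑ x ∈ A, g x) + ∑ x ∈ B, g x := Finset.sum_union_inter
  have hd : symmDiff A B = (A ∪ B) \ (A ∩ B) := by
    ext x
    simp only [Finset.mem_symmDiff, Finset.mem_sdiff, Finset.mem_union, Finset.mem_inter]
    tauto
  have hsub : A ∩ B ⊆ A ∪ B := le_trans Finset.inter_subset_left Finset.subset_union_left
  have hs := Finset.sum_sdiff (f := g) hsub
  rw [hd]
  calc (∑ x ∈ (A ∪ B) \ (A ∩ B), g x)
      = (∑ x ∈ (A ∪ B) \ (A ∩ B), g x) + ((∑ x ∈ A ∩ B, g x) + ∑ x ∈ A ∩ B, g x) := by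
        rw [h2, add_zero]
    _ = ((∑ x ∈ (A ∪ B) \ (A ∩ B), g x) + (∑ x ∈ A ∩ B, g x)) + ∑ x ∈ A ∩ B, g x := by
        rw [add_assoc]
    _ = (∑ x ∈ A ∪ B, g x) + ∑ x ∈ A ∩ B, g x := by rw [hs]
    _ = _ := hu

lemma bdOp_apply (L : LC C) (c : C → ZMod 2) (x : C) :
    bdOp L c x = ∑ y, L.bd x y * c y := rfl

lemma bdOp_single (L : LC C) (t : C) : bdOp L (Pi.single t 1) = col L t := by
  funext x
  rw [bdOp_apply, Finset.sum_eq_single t]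
  · simp [col]
  · intro y _ hy
    simp [Pi.single_apply, hy]
  · simp

lemma bdOp_col (L : LC C) (t : C) : bdOp L (col L t) = 0 := by
  funext x
  rw [bdOp_apply]
  exact L.bd_sq x t

/-- An abstract certificate witnessing the reduced structure of the boundary
matrix with respect to a set `J` of (birth, death) pairs. -/
structure Cert (L : LC C) (f : C → ℝ) (J : Finset (C × C)) where
  Bs : Finset C
  v : C → C → ZMod 2
  As : C → Finset C
  Ms : C → Finset C
  Ns : C → Finset C
  hfi : ∀ x ∈ L.cells, ∀ y ∈ L.cells, f x = f y → x = y
  hBc : Bs ⊆ L.cells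
  hJ : ∀ p ∈ J, p.1 ∈ Bs ∧ p.2 ∈ L.cells ∧ p.2 ∉ Bs ∧ f p.1 < f p.2
  hcov : ∀ z ∈ L.cells, z ∈ Bs ∨ ∃ p ∈ J, p.2 = z
  hfst : ∀ p ∈ J, ∀ q ∈ J, p.1 = q.1 → p = q
  hsnd : ∀ p ∈ J, ∀ q ∈ J, p.2 = q.2 → p = q
  hv1 : ∀ x ∈ Bs, v x x = 1
  hvs : ∀ x ∈ Bs, ∀ y, v x y ≠ 0 → y ∈ L.cells ∧ f y ≤ f x ∧ (y ∈ Bs → y = x)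
  hAs : ∀ p ∈ J, As p.2 ⊆ Bs ∧ p.1 ∈ As p.2 ∧ ∀ x ∈ As p.2, f x ≤ f p.1
  hMs : ∀ p ∈ J, (∀ t ∈ Ms p.2, ∃ q ∈ J, q.2 = t ∧ f t < f p.2) ∧
      col L p.2 = (∑ x ∈ As p.2, v x) + ∑ t ∈ Ms p.2, ∑ x ∈ As t, v x
  hNs : ∀ x ∈ Bs, (∀ t ∈ Ns x, ∃ q ∈ J, q.2 = t ∧ f t < f x) ∧
      col L x = ∑ t ∈ Ns x, ∑ x' ∈ As t, v x'

namespace Cert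

variable {L : LC C} {f : C → ℝ} {J : Finset (C × C)} (ct : Cert L f J)

/-- coefficient of a birth cell in a sum of canonical cycles -/
lemma coeff_birth (A' : Finset C) (hA' : A' ⊆ ct.Bs) (w : C) (hw : w ∈ ct.Bs) :
    (∑ x ∈ A', ct.v x) w = if w ∈ A' then 1 else 0 := by
  rw [Finset.sum_apply]
  rw [show (∑ x ∈ A', ct.v x w) = ∑ x ∈ A', if x = w then 1 else 0 from
    Finset.sum_congr rfl fun x hx => ?_]
  · rw [Finset.sum_ite_eq' A' w (fun _ => (1 : ZMod 2))]
  · by_cases hxw : x = w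
    · subst hxw; simp [ct.hv1 x (hA' hx)]
    · simp only [hxw, if_false]
      by_contra hne
      exact hxw ((ct.hvs x (hA' hx) w hne).2.2 hw).symm

/-- vanishing of a sum of canonical cycles above its filter bound -/
lemma coeff_high (A' : Finset C) (hA' : A' ⊆ ct.Bs) (r : ℝ)
    (hb : ∀ x ∈ A', f x ≤ r) (w : C) (hw : r < f w) :
    (∑ x ∈ A', ct.v x) w = 0 := by
  rw [Finset.sum_apply]
  refine Finset.sum_eq_zero fun x hx => ?_
  by_contra hne
  exact absurd ((ct.hvs x (hA' hx) w hne).2.1.trans (hb x hx)) (not_le.mpr hw)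

lemma col_apply (y x : C) : col L y x = L.bd x y := rfl

/-- if `p` is the top pair, `p.1` belongs to no other `As` set -/
lemma top_notmem (p : C × C) (hp : p ∈ J) (htop : ∀ q ∈ J, f q.1 ≤ f p.1)
    (q : C × C) (hq : q ∈ J) (hqp : q ≠ p) : p.1 ∉ ct.As q.2 := by
  intro hmem
  have h1 : f p.1 ≤ f q.1 := (ct.hAs q hq).2.2 p.1 hmem
  have h2 : f q.1 = f p.1 := le_antisymm (htop q hq) h1
  have : q.1 = p.1 := ct.hfi q.1 (ct.hBc (ct.hJ q hq).1) p.1 (ct.hBc (ct.hJ p hp).1) h2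
  exact hqp (ct.hfst q hq p hp this)

/-- coefficient of the top birth `p.1` in the canonical-cycle sum of `t` -/
lemma coeff_top (p : C × C) (hp : p ∈ J) (htop : ∀ q ∈ J, f q.1 ≤ f p.1)
    (t : C) (hq : ∃ q ∈ J, q.2 = t) :
    (∑ x ∈ ct.As t, ct.v x) p.1 = if t = p.2 then 1 else 0 := by
  obtain ⟨q, hqJ, hqt⟩ := hq
  subst hqt
  rw [ct.coeff_birth (ct.As q.2) (ct.hAs q hqJ).1 p.1 (ct.hJ p hp).1]
  by_cases hqp : q = p
  · subst hqp
    simp [(ct.hAs q hqJ).2.1]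
  · have h1 : p.1 ∉ ct.As q.2 := ct.top_notmem p hp htop q hqJ hqp
    have h2 : q.2 ≠ p.2 := fun h => hqp (ct.hsnd q hqJ p hp h)
    simp [h1, h2]

include ct in
theorem shallow (p : C × C) (hp : p ∈ J)
    (htop : ∀ q ∈ J, f q.1 ≤ f p.1) : IsShallow L f p.1 p.2 := by
  obtain ⟨hMmem, hMeq⟩ := ct.hMs p hp
  have hcol : ∀ x, L.bd x p.2
      = (∑ x' ∈ ct.As p.2, ct.v x') x + ∑ t ∈ ct.Ms p.2, (∑ x' ∈ ct.As t, ct.v x') x := by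
    intro x
    have := congrFun hMeq x
    rw [col_apply] at this
    rw [this]
    simp [Finset.sum_apply, Pi.add_apply]
  refine ⟨?_, ?_, ?_⟩
  · -- L.bd p.1 p.2 = 1
    rw [hcol p.1]
    have h1 : (∑ x' ∈ ct.As p.2, ct.v x') p.1 = 1 := by
      rw [ct.coeff_birth _ (ct.hAs p hp).1 p.1 (ct.hJ p hp).1]
      simp [(ct.hAs p hp).2.1]
    have h2 : ∀ t ∈ ct.Ms p.2, (∑ x' ∈ ct.As t, ct.v x') p.1 = 0 := by
      intro t ht
      obtain ⟨q, hqJ, hqt, hft⟩ := hMmem t ht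
      rw [ct.coeff_top p hp htop t ⟨q, hqJ, hqt⟩]
      have : t ≠ p.2 := fun h => by rw [h] at hft; exact lt_irrefl _ hft
      simp [this]
    rw [h1, Finset.sum_eq_zero h2, add_zero]
  · -- facets of p.2 below f p.1
    intro x hx
    by_contra hgt
    push_neg at hgt
    apply hx
    rw [hcol x]
    have h1 : (∑ x' ∈ ct.As p.2, ct.v x') x = 0 :=
      ct.coeff_high _ (ct.hAs p hp).1 (f p.1) (ct.hAs p hp).2.2 x hgt
    have h2 : ∀ t ∈ ct.Ms p.2, (∑ x' ∈ ct.As t, ct.v x') x = 0 := by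
      intro t ht
      obtain ⟨q, hqJ, hqt, hft⟩ := hMmem t ht
      subst hqt
      refine ct.coeff_high _ (ct.hAs q hqJ).1 (f p.1)
        (fun x' hx' => ((ct.hAs q hqJ).2.2 x' hx').trans (htop q hqJ)) x hgt
    rw [h1, Finset.sum_eq_zero h2, add_zero]
  · -- cofacets of p.1 above f p.2
    intro y hy
    by_contra hlt
    push_neg at hlt
    apply hy
    have hyc : y ∈ L.cells := (L.bd_mem p.1 y hy).2
    rcases ct.hcov y hyc with hyB | ⟨q, hqJ, hqy⟩
    · obtain ⟨hNmem, hNeq⟩ := ct.hNs y hyB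
      have : L.bd p.1 y = ∑ t ∈ ct.Ns y, (∑ x' ∈ ct.As t, ct.v x') p.1 := by
        have := congrFun hNeq p.1
        rw [col_apply] at this
        rw [this]
        simp [Finset.sum_apply, Pi.add_apply]
      rw [this]
      refine Finset.sum_eq_zero fun t ht => ?_
      obtain ⟨q, hqJ, hqt, hft⟩ := hNmem t ht
      rw [ct.coeff_top p hp htop t ⟨q, hqJ, hqt⟩]
      have : t ≠ p.2 := by
        intro h
        rw [h] at hft
        exact absurd (hft.trans hlt) (lt_irrefl _)
      simp [this]
    · subst hqy
      obtain ⟨hMmem', hMeq'⟩ := ct.hMs q hqJ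
      have hcol' : L.bd p.1 q.2
          = (∑ x' ∈ ct.As q.2, ct.v x') p.1
            + ∑ t ∈ ct.Ms q.2, (∑ x' ∈ ct.As t, ct.v x') p.1 := by
        have := congrFun hMeq' p.1
        rw [col_apply] at this
        rw [this]
        simp [Finset.sum_apply, Pi.add_apply]
      rw [hcol']
      have hqp : q ≠ p := by
        intro h
        rw [h] at hlt
        exact lt_irrefl _ hlt
      have h1 : (∑ x' ∈ ct.As q.2, ct.v x') p.1 = 0 := by
        rw [ct.coeff_birth _ (ct.hAs q hqJ).1 p.1 (ct.hJ p hp).1]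
        simp [ct.top_notmem p hp htop q hqJ hqp]
      have h2 : ∀ t ∈ ct.Ms q.2, (∑ x' ∈ ct.As t, ct.v x') p.1 = 0 := by
        intro t ht
        obtain ⟨q', hq'J, hq't, hft⟩ := hMmem' t ht
        rw [ct.coeff_top p hp htop t ⟨q', hq'J, hq't⟩]
        have : t ≠ p.2 := by
          intro h
          rw [h] at hft
          exact absurd (hft.trans hlt) (lt_irrefl _)
        simp [this]
      rw [h1, Finset.sum_eq_zero h2, add_zero]

end Cert

end SP
namespace SP

variable {C : Type} [Fintype C] [DecidableEq C]

def chopv (p : C × C) (w : C → ZMod 2) : C → ZMod 2 :=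
  fun y => if y = p.1 ∨ y = p.2 then 0 else w y

lemma cancel_cells (L : LC C) (s t : C) (h1 : L.bd s t = 1) :
    (cancel L s t).cells = L.cells \ {s, t} := by
  unfold cancel
  rw [dif_pos h1]

lemma cancel_bd (L : LC C) (s t : C) (h1 : L.bd s t = 1) :
    (cancel L s t).bd = cancelBd L s t := by
  unfold cancel
  rw [dif_pos h1]

lemma mem_pair_sdiff (S : Finset C) (a b y : C) :
    y ∈ S \ {a, b} ↔ y ∈ S ∧ y ≠ a ∧ y ≠ b := by
  simp only [Finset.mem_sdiff, Finset.mem_insert, Finset.mem_singleton]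
  tauto

namespace Cert

variable {L : LC C} {f : C → ℝ} {J : Finset (C × C)} (ct : Cert L f J)

include ct in
lemma bd_p2 (p : C × C) (hp : p ∈ J) (htop : ∀ q ∈ J, f q.1 ≤ f p.1) (y : C) :
    L.bd p.2 y = 0 := by
  by_cases hyc : y ∈ L.cells
  swap
  · by_contra h
    exact hyc (L.bd_mem p.2 y h).2
  have hp2 : f p.1 < f p.2 := (ct.hJ p hp).2.2.2
  rcases ct.hcov y hyc with hyB | ⟨q, hqJ, hqy⟩
  · obtain ⟨hNmem, hNeq⟩ := ct.hNs y hyB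
    have := congrFun hNeq p.2
    rw [col_apply] at this
    rw [this, Finset.sum_apply]
    refine Finset.sum_eq_zero fun t ht => ?_
    obtain ⟨q', hq'J, hq't, _⟩ := hNmem t ht
    subst hq't
    exact ct.coeff_high _ (ct.hAs q' hq'J).1 (f p.1)
      (fun x hx => ((ct.hAs q' hq'J).2.2 x hx).trans (htop q' hq'J)) p.2 hp2
  · subst hqy
    obtain ⟨hMmem, hMeq⟩ := ct.hMs q hqJ
    have := congrFun hMeq p.2
    rw [col_apply] at this
    have hform : L.bd p.2 q.2 = (∑ x ∈ ct.As q.2, ct.v x) p.2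
        + ∑ t ∈ ct.Ms q.2, (∑ x ∈ ct.As t, ct.v x) p.2 := by
      rw [this]
      simp [Finset.sum_apply, Pi.add_apply]
    rw [hform]
    have h1 : (∑ x ∈ ct.As q.2, ct.v x) p.2 = 0 :=
      ct.coeff_high _ (ct.hAs q hqJ).1 (f p.1)
        (fun x hx => ((ct.hAs q hqJ).2.2 x hx).trans (htop q hqJ)) p.2 hp2
    have h2 : ∀ t ∈ ct.Ms q.2, (∑ x ∈ ct.As t, ct.v x) p.2 = 0 := by
      intro t ht
      obtain ⟨q', hq'J, hq't, _⟩ := hMmem t ht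
      subst hq't
      exact ct.coeff_high _ (ct.hAs q' hq'J).1 (f p.1)
        (fun x hx => ((ct.hAs q' hq'J).2.2 x hx).trans (htop q' hq'J)) p.2 hp2
    rw [h1, Finset.sum_eq_zero h2, add_zero]

lemma bd_p1_death (p : C × C) (hp : p ∈ J) (htop : ∀ q ∈ J, f q.1 ≤ f p.1)
    (q : C × C) (hqJ : q ∈ J) (hqp : q ≠ p) :
    L.bd p.1 q.2 = if p.2 ∈ ct.Ms q.2 then 1 else 0 := by
  obtain ⟨hMmem, hMeq⟩ := ct.hMs q hqJ
  have := congrFun hMeq p.1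
  rw [col_apply] at this
  have hform : L.bd p.1 q.2 = (∑ x ∈ ct.As q.2, ct.v x) p.1
      + ∑ t ∈ ct.Ms q.2, (∑ x ∈ ct.As t, ct.v x) p.1 := by
    rw [this]
    simp [Finset.sum_apply, Pi.add_apply]
  rw [hform]
  have h1 : (∑ x ∈ ct.As q.2, ct.v x) p.1 = 0 := by
    rw [ct.coeff_birth _ (ct.hAs q hqJ).1 p.1 (ct.hJ p hp).1]
    simp [ct.top_notmem p hp htop q hqJ hqp]
  have h2 : ∀ t ∈ ct.Ms q.2, (∑ x ∈ ct.As t, ct.v x) p.1 = if t = p.2 then 1 else 0 := by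
    intro t ht
    obtain ⟨q', hq'J, hq't, _⟩ := hMmem t ht
    exact ct.coeff_top p hp htop t ⟨q', hq'J, hq't⟩
  rw [h1, zero_add, Finset.sum_congr rfl h2, Finset.sum_ite_eq' (ct.Ms q.2) p.2 (fun _ => (1 : ZMod 2))]

lemma bd_p1_birth (p : C × C) (hp : p ∈ J) (htop : ∀ q ∈ J, f q.1 ≤ f p.1)
    (x : C) (hx : x ∈ ct.Bs) :
    L.bd p.1 x = if p.2 ∈ ct.Ns x then 1 else 0 := by
  obtain ⟨hNmem, hNeq⟩ := ct.hNs x hx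
  have := congrFun hNeq p.1
  rw [col_apply] at this
  have hform : L.bd p.1 x = ∑ t ∈ ct.Ns x, (∑ x' ∈ ct.As t, ct.v x') p.1 := by
    rw [this]
    simp [Finset.sum_apply]
  rw [hform]
  have h2 : ∀ t ∈ ct.Ns x, (∑ x' ∈ ct.As t, ct.v x') p.1 = if t = p.2 then 1 else 0 := by
    intro t ht
    obtain ⟨q', hq'J, hq't, _⟩ := hNmem t ht
    exact ct.coeff_top p hp htop t ⟨q', hq'J, hq't⟩
  rw [Finset.sum_congr rfl h2, Finset.sum_ite_eq' (ct.Ns x) p.2 (fun _ => (1 : ZMod 2))]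

lemma chopv_sum (p : C × C) (hp : p ∈ J) (htop : ∀ q ∈ J, f q.1 ≤ f p.1)
    (t : C) (q' : C × C) (hq'J : q' ∈ J) (hq't : q'.2 = t) (hq'p : q' ≠ p) :
    (∑ x ∈ ct.As t, chopv p (ct.v x)) = ∑ x ∈ ct.As t, ct.v x := by
  subst hq't
  refine Finset.sum_congr rfl fun x hx => ?_
  have hxB : x ∈ ct.Bs := (ct.hAs q' hq'J).1 hx
  have hxp1 : x ≠ p.1 := by
    intro h
    exact ct.top_notmem p hp htop q' hq'J hq'p (h ▸ hx)
  have hfx : f x ≤ f p.1 := ((ct.hAs q' hq'J).2.2 x hx).trans (htop q' hq'J)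
  funext y
  unfold chopv
  by_cases hy1 : y = p.1
  · subst hy1
    rw [if_pos (Or.inl rfl)]
    by_contra h
    have := (ct.hvs x hxB p.1 (Ne.symm h)).2.2 (ct.hJ p hp).1
    exact hxp1 this.symm
  · by_cases hy2 : y = p.2
    · subst hy2
      rw [if_pos (Or.inr rfl)]
      by_contra h
      have hle := (ct.hvs x hxB p.2 (Ne.symm h)).2.1
      exact absurd (hle.trans hfx) (not_le.mpr (ct.hJ p hp).2.2.2)
    · rw [if_neg (by tauto)]

end Cert

end SP
namespace SP

namespace Cert

variable {C : Type} [Fintype C] [DecidableEq C]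
variable {L : LC C} {f : C → ℝ} {J : Finset (C × C)} (ct : Cert L f J)

include ct in
noncomputable def transport (p : C × C) (hp : p ∈ J) (htop : ∀ q ∈ J, f q.1 ≤ f p.1) :
    Cert (cancel L p.1 p.2) f (J.erase p) := by
  classical
  have hsh := ct.shallow p hp htop
  have hbd1 : L.bd p.1 p.2 = 1 := hsh.1
  have hcells : (cancel L p.1 p.2).cells = L.cells \ {p.1, p.2} := cancel_cells L p.1 p.2 hbd1
  have hbd : (cancel L p.1 p.2).bd = cancelBd L p.1 p.2 := cancel_bd L p.1 p.2 hbd1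
  have hp1B : p.1 ∈ ct.Bs := (ct.hJ p hp).1
  have hp2c : p.2 ∈ L.cells := (ct.hJ p hp).2.1
  have hp2B : p.2 ∉ ct.Bs := (ct.hJ p hp).2.2.1
  have hp12 : f p.1 < f p.2 := (ct.hJ p hp).2.2.2
  -- membership in the new cell set
  have hmem' : ∀ y, y ∈ (cancel L p.1 p.2).cells ↔ y ∈ L.cells ∧ y ≠ p.1 ∧ y ≠ p.2 := by
    intro y
    rw [hcells]
    exact mem_pair_sdiff L.cells p.1 p.2 y
  -- the new boundary column, as a function
  have hcol' : ∀ y, y ∈ L.cells → y ≠ p.1 → y ≠ p.2 → ∀ x,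
      (cancel L p.1 p.2).bd x y
        = if x ∈ L.cells ∧ x ≠ p.1 ∧ x ≠ p.2 then L.bd x y + L.bd p.1 y * L.bd x p.2
          else 0 := by
    intro y hyc hy1 hy2 x
    rw [hbd]
    unfold cancelBd
    by_cases hx : x ∈ L.cells \ {p.1, p.2}
    · rw [if_pos ⟨hx, (mem_pair_sdiff L.cells p.1 p.2 y).2 ⟨hyc, hy1, hy2⟩⟩,
        if_pos ((mem_pair_sdiff L.cells p.1 p.2 x).1 hx)]
    · rw [if_neg (fun hc => hx hc.1), if_neg (fun hc => hx ((mem_pair_sdiff L.cells p.1 p.2 x).2 hc))]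
  -- q.2 facts for q ∈ J.erase p
  have hq2facts : ∀ q ∈ J, q ≠ p → q.2 ∈ L.cells ∧ q.2 ≠ p.1 ∧ q.2 ≠ p.2 := by
    intro q hqJ hqp
    refine ⟨(ct.hJ q hqJ).2.1, ?_, ?_⟩
    · intro h
      exact (ct.hJ q hqJ).2.2.1 (h ▸ hp1B)
    · intro h
      exact hqp (ct.hsnd q hqJ p hp h)
  -- membership facts for transformed index sets
  have hMs'mem : ∀ q ∈ J, q ≠ p → ∀ t ∈ (if p.2 ∈ ct.Ms q.2 then
      symmDiff ((ct.Ms q.2).erase p.2) (ct.Ms p.2) else ct.Ms q.2),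
      ∃ q' , (q' ∈ J ∧ q' ≠ p) ∧ q'.2 = t ∧ f t < f q.2 := by
    intro q hqJ hqp t ht
    by_cases hc : p.2 ∈ ct.Ms q.2
    · rw [if_pos hc] at ht
      have hfp2 : f p.2 < f q.2 := by
        obtain ⟨q', hq'J, hq'2, hlt⟩ := (ct.hMs q hqJ).1 p.2 hc
        exact hlt
      rw [Finset.mem_symmDiff] at ht
      rcases ht with ⟨ht1, _⟩ | ⟨ht1, _⟩
      · have ht2 := Finset.mem_of_mem_erase ht1
        have htne := Finset.ne_of_mem_erase ht1
        obtain ⟨q', hq'J, hq't, hlt⟩ := (ct.hMs q hqJ).1 t ht2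
        refine ⟨q', ⟨hq'J, ?_⟩, hq't, hlt⟩
        intro h
        exact htne (by rw [← hq't, h])
      · obtain ⟨q', hq'J, hq't, hlt⟩ := (ct.hMs p hp).1 t ht1
        have htne : t ≠ p.2 := by
          intro h
          rw [h] at hlt
          exact lt_irrefl _ hlt
        refine ⟨q', ⟨hq'J, fun h => htne (by rw [← hq't, h])⟩, hq't, hlt.trans hfp2⟩
    · rw [if_neg hc] at ht
      obtain ⟨q', hq'J, hq't, hlt⟩ := (ct.hMs q hqJ).1 t ht
      have htne : t ≠ p.2 := fun h => hc (h ▸ ht)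
      refine ⟨q', ⟨hq'J, fun h => htne (by rw [← hq't, h])⟩, hq't, hlt⟩
  have hNs'mem : ∀ x ∈ ct.Bs, x ≠ p.1 → ∀ t ∈ (if p.2 ∈ ct.Ns x then
      symmDiff ((ct.Ns x).erase p.2) (ct.Ms p.2) else ct.Ns x),
      ∃ q' , (q' ∈ J ∧ q' ≠ p) ∧ q'.2 = t ∧ f t < f x := by
    intro x hxB hxp t ht
    by_cases hc : p.2 ∈ ct.Ns x
    · rw [if_pos hc] at ht
      have hfp2 : f p.2 < f x := by
        obtain ⟨q', hq'J, hq'2, hlt⟩ := (ct.hNs x hxB).1 p.2 hc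
        exact hlt
      rw [Finset.mem_symmDiff] at ht
      rcases ht with ⟨ht1, _⟩ | ⟨ht1, _⟩
      · have ht2 := Finset.mem_of_mem_erase ht1
        have htne := Finset.ne_of_mem_erase ht1
        obtain ⟨q', hq'J, hq't, hlt⟩ := (ct.hNs x hxB).1 t ht2
        refine ⟨q', ⟨hq'J, fun h => htne (by rw [← hq't, h])⟩, hq't, hlt⟩
      · obtain ⟨q', hq'J, hq't, hlt⟩ := (ct.hMs p hp).1 t ht1
        have htne : t ≠ p.2 := by
          intro h
          rw [h] at hlt
          exact lt_irrefl _ hlt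
        refine ⟨q', ⟨hq'J, fun h => htne (by rw [← hq't, h])⟩, hq't, hlt.trans hfp2⟩
    · rw [if_neg hc] at ht
      obtain ⟨q', hq'J, hq't, hlt⟩ := (ct.hNs x hxB).1 t ht
      have htne : t ≠ p.2 := fun h => hc (h ▸ ht)
      refine ⟨q', ⟨hq'J, fun h => htne (by rw [← hq't, h])⟩, hq't, hlt⟩
  refine {
    Bs := ct.Bs.erase p.1
    v := fun x => chopv p (ct.v x)
    As := ct.As
    Ms := fun t => if p.2 ∈ ct.Ms t then symmDiff ((ct.Ms t).erase p.2) (ct.Ms p.2) else ct.Ms t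
    Ns := fun x => if p.2 ∈ ct.Ns x then symmDiff ((ct.Ns x).erase p.2) (ct.Ms p.2) else ct.Ns x
    hfi := ?_, hBc := ?_, hJ := ?_, hcov := ?_, hfst := ?_, hsnd := ?_
    hv1 := ?_, hvs := ?_, hAs := ?_, hMs := ?_, hNs := ?_ }
  · -- hfi
    intro x hx y hy
    exact ct.hfi x ((hmem' x).1 hx).1 y ((hmem' y).1 hy).1
  · -- hBc
    intro x hx
    have hx1 := Finset.ne_of_mem_erase hx
    have hx2 := Finset.mem_of_mem_erase hx
    refine (hmem' x).2 ⟨ct.hBc hx2, hx1, fun h => hp2B (h ▸ hx2)⟩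
  · -- hJ
    intro q hq
    rw [Finset.mem_erase] at hq
    obtain ⟨hqp, hqJ⟩ := hq
    obtain ⟨hc, h1, h2⟩ := hq2facts q hqJ hqp
    refine ⟨Finset.mem_erase.2 ⟨?_, (ct.hJ q hqJ).1⟩, (hmem' q.2).2 ⟨hc, h1, h2⟩,
      fun h => (ct.hJ q hqJ).2.2.1 (Finset.mem_of_mem_erase h), (ct.hJ q hqJ).2.2.2⟩
    intro h
    exact hqp (ct.hfst q hqJ p hp h)
  · -- hcov
    intro z hz
    obtain ⟨hzc, hz1, hz2⟩ := (hmem' z).1 hz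
    rcases ct.hcov z hzc with hzB | ⟨q, hqJ, hq2⟩
    · exact Or.inl (Finset.mem_erase.2 ⟨hz1, hzB⟩)
    · refine Or.inr ⟨q, Finset.mem_erase.2 ⟨?_, hqJ⟩, hq2⟩
      intro h
      exact hz2 (by rw [← hq2, h])
  · -- hfst
    intro q hq q' hq' h
    exact ct.hfst q (Finset.mem_of_mem_erase hq) q' (Finset.mem_of_mem_erase hq') h
  · -- hsnd
    intro q hq q' hq' h
    exact ct.hsnd q (Finset.mem_of_mem_erase hq) q' (Finset.mem_of_mem_erase hq') h
  · -- hv1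
    intro x hx
    have hx1 := Finset.ne_of_mem_erase hx
    have hx2 := Finset.mem_of_mem_erase hx
    show (if x = p.1 ∨ x = p.2 then 0 else ct.v x x) = 1
    rw [if_neg (by push_neg; exact ⟨hx1, fun h => hp2B (h ▸ hx2)⟩)]
    exact ct.hv1 x hx2
  · -- hvs
    intro x hx y hy
    have hx2 := Finset.mem_of_mem_erase hx
    have hy' : (if y = p.1 ∨ y = p.2 then 0 else ct.v x y) ≠ 0 := hy
    by_cases hc : y = p.1 ∨ y = p.2
    · rw [if_pos hc] at hy'
      exact absurd rfl hy'
    · rw [if_neg hc] at hy'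
      have hy := hy'
      push_neg at hc
      obtain ⟨h1, h2, h3⟩ := ct.hvs x hx2 y hy
      exact ⟨(hmem' y).2 ⟨h1, hc.1, hc.2⟩, h2, fun hyB => h3 (Finset.mem_of_mem_erase hyB)⟩
  · -- hAs
    intro q hq
    rw [Finset.mem_erase] at hq
    obtain ⟨hqp, hqJ⟩ := hq
    obtain ⟨h1, h2, h3⟩ := ct.hAs q hqJ
    refine ⟨fun x hx => Finset.mem_erase.2 ⟨?_, h1 hx⟩, h2, h3⟩
    intro h
    exact ct.top_notmem p hp htop q hqJ hqp (h ▸ hx)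
  · -- hMs : the key column identity for deaths
    intro q hq
    rw [Finset.mem_erase] at hq
    obtain ⟨hqp, hqJ⟩ := hq
    obtain ⟨hqc, hq1, hq2⟩ := hq2facts q hqJ hqp
    constructor
    · intro t ht
      obtain ⟨q', ⟨hq'J, hq'p⟩, hq't, hlt⟩ := hMs'mem q hqJ hqp t ht
      exact ⟨q', Finset.mem_erase.2 ⟨hq'p, hq'J⟩, hq't, hlt⟩
    · -- the equation
      have hveq : (∑ x ∈ ct.As q.2, chopv p (ct.v x)) = ∑ x ∈ ct.As q.2, ct.v x :=
        ct.chopv_sum p hp htop q.2 q hqJ rfl hqp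
      have hveqM : ∀ t ∈ (if p.2 ∈ ct.Ms q.2 then
          symmDiff ((ct.Ms q.2).erase p.2) (ct.Ms p.2) else ct.Ms q.2),
          (∑ x ∈ ct.As t, chopv p (ct.v x)) = ∑ x ∈ ct.As t, ct.v x := by
        intro t ht
        obtain ⟨q', ⟨hq'J, hq'p⟩, hq't, _⟩ := hMs'mem q hqJ hqp t ht
        exact ct.chopv_sum p hp htop t q' hq'J hq't hq'p
      rw [hveq, Finset.sum_congr rfl hveqM]
      have hcoeff : L.bd p.1 q.2 = if p.2 ∈ ct.Ms q.2 then 1 else 0 :=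
        ct.bd_p1_death p hp htop q hqJ hqp
      by_cases hc : p.2 ∈ ct.Ms q.2
      · -- merged case
        rw [if_pos hc]
        rw [if_pos hc] at hcoeff
        have hfun : col (cancel L p.1 p.2) q.2 = col L q.2 + col L p.2 := by
          funext x
          show (cancel L p.1 p.2).bd x q.2 = L.bd x q.2 + L.bd x p.2
          rw [hcol' q.2 hqc hq1 hq2 x]
          by_cases hx : x ∈ L.cells ∧ x ≠ p.1 ∧ x ≠ p.2
          · rw [if_pos hx, hcoeff, one_mul]
          · rw [if_neg hx]
            push_neg at hx
            by_cases hx1 : x ∈ L.cells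
            · by_cases hx2 : x = p.1
              · subst hx2
                rw [hcoeff, hbd1, z2add]
              · have hx3 : x = p.2 := hx hx1 hx2
                subst hx3
                rw [ct.bd_p2 p hp htop q.2, ct.bd_p2 p hp htop p.2, add_zero]
            · rw [(by by_contra h; exact hx1 (L.bd_mem x q.2 h).1 : L.bd x q.2 = 0),
                (by by_contra h; exact hx1 (L.bd_mem x p.2 h).1 : L.bd x p.2 = 0), add_zero]
        rw [hfun, (ct.hMs q hqJ).2, (ct.hMs p hp).2]
        rw [sum_symmDiff' fun2add]
        have herase : ∑ t ∈ ct.Ms q.2, ∑ x ∈ ct.As t, ct.v x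
            = (∑ t ∈ (ct.Ms q.2).erase p.2, ∑ x ∈ ct.As t, ct.v x) + ∑ x ∈ ct.As p.2, ct.v x :=
          (Finset.sum_erase_add (ct.Ms q.2) _ hc).symm
        rw [herase]
        have habel : ∀ a b c d : C → ZMod 2, (a + (b + c)) + (c + d) = a + (b + d) + (c + c) := by
          intro a b c d
          abel
        rw [habel, fun2add, add_zero]
      · -- untouched case
        rw [if_neg hc]
        rw [if_neg hc] at hcoeff
        have hfun : col (cancel L p.1 p.2) q.2 = col L q.2 := by
          funext x
          show (cancel L p.1 p.2).bd x q.2 = L.bd x q.2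
          rw [hcol' q.2 hqc hq1 hq2 x]
          by_cases hx : x ∈ L.cells ∧ x ≠ p.1 ∧ x ≠ p.2
          · rw [if_pos hx, hcoeff, zero_mul, add_zero]
          · rw [if_neg hx]
            push_neg at hx
            by_cases hx1 : x ∈ L.cells
            · by_cases hx2 : x = p.1
              · subst hx2
                exact hcoeff.symm
              · have hx3 : x = p.2 := hx hx1 hx2
                subst hx3
                exact (ct.bd_p2 p hp htop q.2).symm
            · by_contra h
              exact hx1 (L.bd_mem x q.2 (fun h' => h h'.symm)).1
        rw [hfun, (ct.hMs q hqJ).2]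
  · -- hNs : the key column identity for births
    intro x hx
    have hx1 := Finset.ne_of_mem_erase hx
    have hxB := Finset.mem_of_mem_erase hx
    have hxc : x ∈ L.cells := ct.hBc hxB
    have hx2 : x ≠ p.2 := fun h => hp2B (h ▸ hxB)
    constructor
    · intro t ht
      obtain ⟨q', ⟨hq'J, hq'p⟩, hq't, hlt⟩ := hNs'mem x hxB hx1 t ht
      exact ⟨q', Finset.mem_erase.2 ⟨hq'p, hq'J⟩, hq't, hlt⟩
    · have hveqN : ∀ t ∈ (if p.2 ∈ ct.Ns x then
          symmDiff ((ct.Ns x).erase p.2) (ct.Ms p.2) else ct.Ns x),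
          (∑ x' ∈ ct.As t, chopv p (ct.v x')) = ∑ x' ∈ ct.As t, ct.v x' := by
        intro t ht
        obtain ⟨q', ⟨hq'J, hq'p⟩, hq't, _⟩ := hNs'mem x hxB hx1 t ht
        exact ct.chopv_sum p hp htop t q' hq'J hq't hq'p
      rw [Finset.sum_congr rfl hveqN]
      have hcoeff : L.bd p.1 x = if p.2 ∈ ct.Ns x then 1 else 0 :=
        ct.bd_p1_birth p hp htop x hxB
      by_cases hc : p.2 ∈ ct.Ns x
      · rw [if_pos hc]
        rw [if_pos hc] at hcoeff
        have hfun : col (cancel L p.1 p.2) x = col L x + col L p.2 := by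
          funext x'
          show (cancel L p.1 p.2).bd x' x = L.bd x' x + L.bd x' p.2
          rw [hcol' x hxc hx1 hx2 x']
          by_cases hx' : x' ∈ L.cells ∧ x' ≠ p.1 ∧ x' ≠ p.2
          · rw [if_pos hx', hcoeff, one_mul]
          · rw [if_neg hx']
            push_neg at hx'
            by_cases hc1 : x' ∈ L.cells
            · by_cases hc2 : x' = p.1
              · subst hc2
                rw [hcoeff, hbd1, z2add]
              · have hc3 : x' = p.2 := hx' hc1 hc2
                subst hc3
                rw [ct.bd_p2 p hp htop x, ct.bd_p2 p hp htop p.2, add_zero]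
            · rw [(by by_contra h; exact hc1 (L.bd_mem x' x h).1 : L.bd x' x = 0),
                (by by_contra h; exact hc1 (L.bd_mem x' p.2 h).1 : L.bd x' p.2 = 0), add_zero]
        rw [hfun, (ct.hNs x hxB).2, (ct.hMs p hp).2]
        rw [sum_symmDiff' fun2add]
        have herase : ∑ t ∈ ct.Ns x, ∑ x' ∈ ct.As t, ct.v x'
            = (∑ t ∈ (ct.Ns x).erase p.2, ∑ x' ∈ ct.As t, ct.v x') + ∑ x' ∈ ct.As p.2, ct.v x' :=
          (Finset.sum_erase_add (ct.Ns x) _ hc).symm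
        rw [herase]
        have habel : ∀ a b c : C → ZMod 2, (a + b) + (b + c) = a + c + (b + b) := by
          intro a b c
          abel
        rw [habel, fun2add, add_zero]
      · rw [if_neg hc]
        rw [if_neg hc] at hcoeff
        have hfun : col (cancel L p.1 p.2) x = col L x := by
          funext x'
          show (cancel L p.1 p.2).bd x' x = L.bd x' x
          rw [hcol' x hxc hx1 hx2 x']
          by_cases hx' : x' ∈ L.cells ∧ x' ≠ p.1 ∧ x' ≠ p.2
          · rw [if_pos hx', hcoeff, zero_mul, add_zero]
          · rw [if_neg hx']
            push_neg at hx'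
            by_cases hc1 : x' ∈ L.cells
            · by_cases hc2 : x' = p.1
              · subst hc2
                exact hcoeff.symm
              · have hc3 : x' = p.2 := hx' hc1 hc2
                subst hc3
                exact (ct.bd_p2 p hp htop x).symm
            · by_contra h
              exact hc1 (L.bd_mem x' x (fun h' => h h'.symm)).1
        rw [hfun, (ct.hNs x hxB).2]

end Cert

end SP
namespace SP

variable {C : Type} [Fintype C] [DecidableEq C]

lemma cancelList_append (L : LC C) (l : List (C × C)) (p : C × C) :
    cancelList L (l ++ [p]) = cancel (cancelList L l) p.1 p.2 := by
  induction l generalizing L with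
  | nil => rfl
  | cons q l ih =>
    show cancelList (cancel L q.1 q.2) (l ++ [p]) = _
    rw [ih]
    rfl

lemma quotAt_succ (L : LC C) {n : ℕ} (A : Fin n → C × C) (k : ℕ) (hk : k < n) :
    quotAt L A (k + 1) = cancel (quotAt L A k) (A ⟨k, hk⟩).1 (A ⟨k, hk⟩).2 := by
  unfold quotAt
  have h1 : (List.ofFn A).take (k + 1) = (List.ofFn A).take k ++ [A ⟨k, hk⟩] := by
    rw [List.take_succ]
    congr 1
    have : (List.ofFn A)[k]? = some (A ⟨k, hk⟩) := by
      rw [List.getElem?_eq_getElem (by simpa using hk)]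
      simp
    rw [this]
    rfl
  rw [h1, cancelList_append]

section Glue

variable (L : LC C) (f : C → ℝ)

theorem main_glue (base : Nonempty (Cert L f (BD L f)))
    (A : Fin (BD L f).card → C × C)
    (hinj : Function.Injective A) (hmem : ∀ i, A i ∈ BD L f)
    (hord : ∀ i j : Fin (BD L f).card, i < j → f (A j).1 < f (A i).1) :
    IsShallowOrder L f A := by
  classical
  -- the sets of remaining pairs
  set Jk : ℕ → Finset (C × C) :=
    fun k => (Finset.univ.filter (fun j : Fin (BD L f).card => k ≤ (j : ℕ))).image A with hJk
  have hJ0 : Jk 0 = BD L f := by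
    have h1 : (Finset.univ.filter (fun j : Fin (BD L f).card => 0 ≤ (j : ℕ))) = Finset.univ := by
      simp
    have h2 : Jk 0 = Finset.univ.image A := by rw [hJk]; simp [h1]
    rw [h2]
    apply Finset.eq_of_subset_of_card_le
    · intro q hq
      obtain ⟨j, _, rfl⟩ := Finset.mem_image.1 hq
      exact hmem j
    · rw [Finset.card_image_of_injective _ hinj]
      simp
  have hmemJk : ∀ (k : ℕ) (hk : k < (BD L f).card), A ⟨k, hk⟩ ∈ Jk k := by
    intro k hk
    refine Finset.mem_image.2 ⟨⟨k, hk⟩, ?_, rfl⟩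
    simp
  have htopJk : ∀ (k : ℕ) (hk : k < (BD L f).card), ∀ q ∈ Jk k, f q.1 ≤ f (A ⟨k, hk⟩).1 := by
    intro k hk q hq
    obtain ⟨j, hj, rfl⟩ := Finset.mem_image.1 hq
    rw [Finset.mem_filter] at hj
    rcases eq_or_lt_of_le hj.2 with heq | hlt
    · have : (⟨k, hk⟩ : Fin (BD L f).card) = j := Fin.ext heq
      rw [this]
    · exact le_of_lt (hord ⟨k, hk⟩ j hlt)
  have hJsucc : ∀ (k : ℕ) (hk : k < (BD L f).card), Jk (k + 1) = (Jk k).erase (A ⟨k, hk⟩) := by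
    intro k hk
    ext q
    rw [hJk]
    simp only [Finset.mem_image, Finset.mem_filter, Finset.mem_univ, true_and,
      Finset.mem_erase]
    constructor
    · rintro ⟨j, hj, rfl⟩
      refine ⟨?_, j, by omega, rfl⟩
      intro h
      have : j = ⟨k, hk⟩ := hinj h
      rw [this] at hj
      simp at hj
    · rintro ⟨hne, j, hj, rfl⟩
      refine ⟨j, ?_, rfl⟩
      rcases eq_or_lt_of_le hj with heq | hlt
      · exact absurd (congrArg A (Fin.ext heq.symm : j = ⟨k, hk⟩)) hne
      · omega
  -- inductive construction of certificates
  have hcert : ∀ k : ℕ, k ≤ (BD L f).card → Nonempty (Cert (quotAt L A k) f (Jk k)) := by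
    intro k
    induction k with
    | zero =>
      intro _
      rw [hJ0]
      exact base
    | succ k ih =>
      intro hk1
      have hk : k < (BD L f).card := by omega
      obtain ⟨ct⟩ := ih (by omega)
      rw [quotAt_succ L A k hk, hJsucc k hk]
      exact ⟨ct.transport (A ⟨k, hk⟩) (hmemJk k hk) (htopJk k hk)⟩
  refine ⟨hinj, hmem, ?_⟩
  intro i
  obtain ⟨ct⟩ := hcert (i : ℕ) (le_of_lt i.2)
  have := ct.shallow (A ⟨(i : ℕ), i.2⟩) (hmemJk (i : ℕ) i.2) (htopJk (i : ℕ) i.2)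
  simpa using this

end Glue

end SP
namespace SP

variable {C : Type} [Fintype C] [DecidableEq C]

section Machinery

variable (L : LC C) (f : C → ℝ)

def suppF (c : C → ZMod 2) : Finset C := Finset.univ.filter (fun z => c z ≠ 0)

lemma mem_suppF (c : C → ZMod 2) (z : C) : z ∈ suppF c ↔ c z ≠ 0 := by
  simp [suppF]

lemma c_eq_sum_single (c : C → ZMod 2) : c = ∑ t ∈ suppF c, (Pi.single t 1 : C → ZMod 2) := by
  funext y
  rw [Finset.sum_apply]
  have h1 : ∀ t ∈ suppF c, (Pi.single t 1 : C → ZMod 2) y = if t = y then (1 : ZMod 2) else 0 := by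
    intro t _
    simp [Pi.single_apply, eq_comm]
  rw [Finset.sum_congr rfl h1, Finset.sum_ite_eq' (suppF c) y (fun _ => (1 : ZMod 2))]
  rcases z2 (c y) with h | h <;> simp [h, mem_suppF]

lemma bdOp_suppF (c : C → ZMod 2) : bdOp L c = ∑ t ∈ suppF c, col L t := by
  conv_lhs => rw [c_eq_sum_single c]
  rw [map_sum]
  exact Finset.sum_congr rfl fun t _ => bdOp_single L t

lemma exists_max_supp (c : C → ZMod 2) (hne : c ≠ 0) :
    ∃ x, c x ≠ 0 ∧ ∀ z, c z ≠ 0 → f z ≤ f x := by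
  have hne' : (suppF c).Nonempty := by
    rw [Finset.nonempty_iff_ne_empty]
    intro h
    apply hne
    funext y
    by_contra hy
    have : y ∈ suppF c := (mem_suppF c y).2 hy
    rw [h] at this
    exact absurd this (Finset.notMem_empty y)
  obtain ⟨x, hx, hmax⟩ := Finset.exists_max_image (suppF c) f hne'
  exact ⟨x, (mem_suppF c x).1 hx, fun z hz => hmax z ((mem_suppF c z).2 hz)⟩

variable (hf : IsFilter L f)

lemma birth_or_death (x : C) (hx : x ∈ L.cells) :
    givesBirth L f x ∨ givesDeath L f x := by
  by_cases h : IsBdryBelow L f (f x) (col L x)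
  · exact Or.inl ⟨hx, h⟩
  · exact Or.inr ⟨hx, h⟩

lemma not_birth_and_death (x : C) : ¬(givesBirth L f x ∧ givesDeath L f x) := by
  rintro ⟨⟨_, h1⟩, ⟨_, h2⟩⟩
  exact h2 h1

/-- the condition under which `canChain` is meaningful -/
def CCgood (y : C) : Prop :=
  ∃ c : C → ZMod 2,
    (∀ z, c z ≠ 0 → f z < f y ∧ givesDeath L f z) ∧ bdOp L c = col L y

include hf in
/-- any chain below `b` can be replaced by a death-supported chain with the
same boundary, provided canonical chains exist for all births below `b` -/
lemma deathify (b : ℝ)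
    (hcc : ∀ x, givesBirth L f x → f x < b →
      (∀ z, canChain L f x z ≠ 0 → f z < f x ∧ givesDeath L f z) ∧
      bdOp L (canChain L f x) = col L x) :
    ∀ (k : ℕ) (c : C → ZMod 2),
      (∀ z, c z ≠ 0 → z ∈ L.cells ∧ f z < b) →
      (Finset.univ.filter (fun z => c z ≠ 0 ∧ givesBirth L f z)).card ≤ k →
      ∃ c' : C → ZMod 2,
        (∀ z, c' z ≠ 0 → givesDeath L f z ∧ f z < b ∧ ∃ w, c w ≠ 0 ∧ f z ≤ f w) ∧
        bdOp L c' = bdOp L c := by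
  intro k
  induction k with
  | zero =>
    intro c hc hcard
    refine ⟨c, fun z hz => ?_, rfl⟩
    have hz1 := hc z hz
    have hnb : ¬ givesBirth L f z := by
      intro hb
      have : z ∈ Finset.univ.filter (fun z => c z ≠ 0 ∧ givesBirth L f z) := by
        simp [hz, hb]
      rw [Finset.card_eq_zero.1 (Nat.le_zero.1 hcard)] at this
      exact absurd this (Finset.notMem_empty z)
    rcases birth_or_death L f z hz1.1 with h | h
    · exact absurd h hnb
    · exact ⟨h, hz1.2, z, hz, le_refl _⟩
  | succ k ih =>
    intro c hc hcard
    by_cases hB : ∃ x, c x ≠ 0 ∧ givesBirth L f x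
    · obtain ⟨x, hx, hxb⟩ := hB
      have hfx : f x < b := (hc x hx).2
      obtain ⟨hccs, hcce⟩ := hcc x hxb hfx
      set c₂ : C → ZMod 2 := c + (Pi.single x 1 : C → ZMod 2) + canChain L f x with hc₂
      have hsplit : ∀ z, z ≠ x → c₂ z = c z + canChain L f x z := by
        intro z hzx
        rw [hc₂]
        simp only [Pi.add_apply]
        rw [Pi.single_eq_of_ne hzx, add_zero]
      have hcsupp : ∀ z, c₂ z ≠ 0 → z ∈ L.cells ∧ f z < b := by
        intro z hz
        by_cases hzx : z = x
        · rw [hzx]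
          exact ⟨hxb.1, hfx⟩
        · rw [hsplit z hzx] at hz
          by_cases h1 : c z ≠ 0
          · exact hc z h1
          · push_neg at h1
            rw [h1, zero_add] at hz
            have := hccs z hz
            exact ⟨this.2.1, lt_trans this.1 hfx⟩
      have hkey : ∀ z, c₂ z ≠ 0 → z ≠ x ∧ (c z ≠ 0 ∨ canChain L f x z ≠ 0) := by
        intro z hz
        by_cases hzx : z = x
        · exfalso
          apply hz
          have hcx : canChain L f x x = 0 := by
            by_contra h
            exact absurd (hccs x h).1 (lt_irrefl _)
          have hc1 : c x = 1 := (z2 (c x)).resolve_left hx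
          rw [hzx, hc₂]
          simp only [Pi.add_apply]
          rw [hc1, hcx, add_zero, Pi.single_eq_same]
          decide
        · refine ⟨hzx, ?_⟩
          rw [hsplit z hzx] at hz
          by_cases h1 : c z ≠ 0
          · exact Or.inl h1
          · push_neg at h1
            rw [h1, zero_add] at hz
            exact Or.inr hz
      have hclo : ∀ z, c₂ z ≠ 0 → ∃ w, c w ≠ 0 ∧ f z ≤ f w := by
        intro z hz
        rcases (hkey z hz).2 with h | h
        · exact ⟨z, h, le_refl _⟩
        · exact ⟨x, hx, le_of_lt (hccs z h).1⟩
      have hcard₂ : (Finset.univ.filter (fun z => c₂ z ≠ 0 ∧ givesBirth L f z)).card ≤ k := by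
        have hsub : (Finset.univ.filter (fun z => c₂ z ≠ 0 ∧ givesBirth L f z))
            ⊆ (Finset.univ.filter (fun z => c z ≠ 0 ∧ givesBirth L f z)).erase x := by
          intro z hz
          rw [Finset.mem_filter] at hz
          obtain ⟨_, hz2, hz3⟩ := hz
          obtain ⟨hzx, hor⟩ := hkey z hz2
          rw [Finset.mem_erase, Finset.mem_filter]
          rcases hor with h | h
          · exact ⟨hzx, Finset.mem_univ z, h, hz3⟩
          · exact absurd (not_birth_and_death L f z ⟨hz3, (hccs z h).2⟩) (fun h' => h')
        have hxin : x ∈ Finset.univ.filter (fun z => c z ≠ 0 ∧ givesBirth L f z) := by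
          simp [hx, hxb]
        calc (Finset.univ.filter (fun z => c₂ z ≠ 0 ∧ givesBirth L f z)).card
            ≤ ((Finset.univ.filter (fun z => c z ≠ 0 ∧ givesBirth L f z)).erase x).card :=
              Finset.card_le_card hsub
          _ = (Finset.univ.filter (fun z => c z ≠ 0 ∧ givesBirth L f z)).card - 1 :=
              Finset.card_erase_of_mem hxin
          _ ≤ k := by omega
      obtain ⟨c', hc's, hc'e⟩ := ih c₂ hcsupp hcard₂
      refine ⟨c', fun z hz => ?_, ?_⟩
      · obtain ⟨h1, h2, w₂, hw₂, hw₂f⟩ := hc's z hz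
        obtain ⟨w, hw, hwf⟩ := hclo w₂ hw₂
        exact ⟨h1, h2, w, hw, hw₂f.trans hwf⟩
      · rw [hc'e]
        have : bdOp L c₂ = bdOp L c + col L x + col L x := by
          rw [hc₂]
          rw [map_add, map_add, bdOp_single, hcce]
        rw [this, add_assoc, fun2add, add_zero]
    · push_neg at hB
      refine ⟨c, fun z hz => ?_, rfl⟩
      have hz1 := hc z hz
      rcases birth_or_death L f z hz1.1 with h | h
      · exact absurd h (by simpa using hB z hz)
      · exact ⟨h, hz1.2, z, hz, le_refl _⟩

include hf in
lemma ccgood_all : ∀ x, givesBirth L f x → CCgood L f x := by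
  suffices h : ∀ (k : ℕ) (x : C), givesBirth L f x →
      (L.cells.filter (fun z => f z < f x)).card ≤ k → CCgood L f x by
    intro x hx
    exact h (L.cells.filter (fun z => f z < f x)).card x hx (le_refl _)
  intro k
  induction k with
  | zero =>
    intro x hx hcard
    obtain ⟨hxc, c, hcs, hce⟩ := hx
    refine ⟨c, fun z hz => ?_, hce⟩
    exfalso
    have : z ∈ L.cells.filter (fun z => f z < f x) := by
      rw [Finset.mem_filter]
      exact ⟨(hcs z hz).1, (hcs z hz).2⟩
    rw [Finset.card_eq_zero.1 (Nat.le_zero.1 hcard)] at this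
    exact absurd this (Finset.notMem_empty z)
  | succ k ih =>
    intro x hx hcard
    obtain ⟨hxc, c, hcs, hce⟩ := hx
    have hcc : ∀ x', givesBirth L f x' → f x' < f x →
        (∀ z, canChain L f x' z ≠ 0 → f z < f x' ∧ givesDeath L f z) ∧
        bdOp L (canChain L f x') = col L x' := by
      intro x' hx' hfx'
      have hgood : CCgood L f x' := by
        apply ih x' hx'
        have hsub : L.cells.filter (fun z => f z < f x')
            ⊆ (L.cells.filter (fun z => f z < f x)).erase x' := by
          intro z hz
          rw [Finset.mem_filter] at hz
          rw [Finset.mem_erase, Finset.mem_filter]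
          refine ⟨?_, hz.1, lt_trans hz.2 hfx'⟩
          intro h
          rw [h] at hz
          exact absurd hz.2 (lt_irrefl _)
        have hxin : x' ∈ L.cells.filter (fun z => f z < f x) := by
          rw [Finset.mem_filter]
          exact ⟨hx'.1, hfx'⟩
        calc (L.cells.filter (fun z => f z < f x')).card
            ≤ ((L.cells.filter (fun z => f z < f x)).erase x').card := Finset.card_le_card hsub
          _ = (L.cells.filter (fun z => f z < f x)).card - 1 := Finset.card_erase_of_mem hxin
          _ ≤ k := by omega
      unfold CCgood at hgood
      unfold canChain
      rw [dif_pos hgood]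
      exact ⟨fun z hz => hgood.choose_spec.1 z hz, hgood.choose_spec.2⟩
    obtain ⟨c', hc's, hc'e⟩ := deathify L f hf (f x) hcc
      (Finset.univ.filter (fun z => c z ≠ 0 ∧ givesBirth L f z)).card c hcs (le_refl _)
    exact ⟨c', fun z hz => ⟨(hc's z hz).2.1, (hc's z hz).1⟩, by rw [hc'e, hce]⟩

include hf in
lemma canChain_spec (x : C) (hx : givesBirth L f x) :
    (∀ z, canChain L f x z ≠ 0 → f z < f x ∧ givesDeath L f z) ∧
    bdOp L (canChain L f x) = col L x := by
  have hgood := ccgood_all L f hf x hx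
  unfold CCgood at hgood
  unfold canChain
  rw [dif_pos hgood]
  exact ⟨fun z hz => hgood.choose_spec.1 z hz, hgood.choose_spec.2⟩

include hf in
lemma cyc_self (x : C) (hx : givesBirth L f x) : canCycle L f x x = 1 := by
  unfold canCycle
  have h : canChain L f x x = 0 := by
    by_contra h
    exact absurd ((canChain_spec L f hf x hx).1 x h).1 (lt_irrefl _)
  simp [h]

include hf in
lemma cyc_supp (x : C) (hx : givesBirth L f x) (y : C) (hy : canCycle L f x y ≠ 0) :
    y ∈ L.cells ∧ f y ≤ f x ∧ (givesBirth L f y → y = x) := by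
  by_cases hyx : y = x
  · subst hyx
    exact ⟨hx.1, le_refl _, fun _ => rfl⟩
  · have h : canChain L f x y ≠ 0 := by
      unfold canCycle at hy
      simpa [Pi.single_apply, hyx] using hy
    obtain ⟨h1, h2⟩ := (canChain_spec L f hf x hx).1 y h
    exact ⟨h2.1, le_of_lt h1, fun hb => (not_birth_and_death L f y ⟨hb, h2⟩).elim⟩

include hf in
lemma bdOp_cyc (x : C) (hx : givesBirth L f x) : bdOp L (canCycle L f x) = 0 := by
  unfold canCycle
  rw [map_add, bdOp_single, (canChain_spec L f hf x hx).2, fun2add]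

include hf in
lemma sumcyc_coeff (A : Finset C) (hA : ∀ x ∈ A, givesBirth L f x) (w : C)
    (hw : givesBirth L f w) :
    (∑ x ∈ A, canCycle L f x) w = if w ∈ A then 1 else 0 := by
  rw [Finset.sum_apply]
  rw [show (∑ x ∈ A, canCycle L f x w) = ∑ x ∈ A, if x = w then 1 else 0 from
    Finset.sum_congr rfl fun x hx => ?_]
  · rw [Finset.sum_ite_eq' A w (fun _ => (1 : ZMod 2))]
  · by_cases hxw : x = w
    · subst hxw
      simp [cyc_self L f hf x (hA x hx)]
    · simp only [hxw, if_false]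
      by_contra hne
      exact hxw (((cyc_supp L f hf x (hA x hx) w hne).2.2 hw).symm)

include hf in
lemma cycdec (b : ℝ) :
    ∀ (k : ℕ) (w : C → ZMod 2), bdOp L w = 0 →
    (∀ z, w z ≠ 0 → z ∈ L.cells ∧ f z < b) →
    (Finset.univ.filter (fun z => z ∈ L.cells ∧ ∃ y, w y ≠ 0 ∧ f z ≤ f y)).card ≤ k →
    ∃ Bf : Finset C, (∀ x ∈ Bf, givesBirth L f x ∧ f x < b ∧ ∃ z, w z ≠ 0 ∧ f x ≤ f z)
      ∧ w = ∑ x ∈ Bf, canCycle L f x := by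
  intro k
  induction k with
  | zero =>
    intro w hcyc hsupp hcard
    refine ⟨∅, by simp, ?_⟩
    rw [Finset.sum_empty]
    funext y
    by_contra hy
    have : y ∈ Finset.univ.filter (fun z => z ∈ L.cells ∧ ∃ y', w y' ≠ 0 ∧ f z ≤ f y') := by
      simp only [Finset.mem_filter, Finset.mem_univ, true_and]
      exact ⟨(hsupp y (by simpa using hy)).1, y, (by simpa using hy), le_refl _⟩
    rw [Finset.card_eq_zero.1 (Nat.le_zero.1 hcard)] at this
    exact absurd this (Finset.notMem_empty y)
  | succ k ih =>
    intro w hcyc hsupp hcard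
    by_cases hw0 : w = 0
    · exact ⟨∅, by simp, by rw [hw0, Finset.sum_empty]⟩
    obtain ⟨x, hx, hmax⟩ := exists_max_supp f w hw0
    have hxc : x ∈ L.cells := (hsupp x hx).1
    have hxlt : f x < b := (hsupp x hx).2
    have hstrict : ∀ z, w z ≠ 0 → z ≠ x → f z < f x := by
      intro z hz hzx
      rcases lt_or_eq_of_le (hmax z hz) with h | h
      · exact h
      · exact absurd (hf.1 z (hsupp z hz).1 x hxc h) hzx
    -- x is a birth
    have hxb : givesBirth L f x := by
      refine ⟨hxc, w + (Pi.single x 1 : C → ZMod 2), fun z hz => ?_, ?_⟩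
      · by_cases hzx : z = x
        · exfalso
          apply hz
          have h1 : w x = 1 := (z2 (w x)).resolve_left hx
          rw [hzx]
          show w x + (Pi.single x 1 : C → ZMod 2) x = 0
          rw [h1, Pi.single_eq_same]
          decide
        · have hz' : w z ≠ 0 := by
            intro h0
            apply hz
            show w z + (Pi.single x 1 : C → ZMod 2) z = 0
            rw [Pi.single_eq_of_ne hzx, add_zero]
            exact h0
          exact ⟨(hsupp z hz').1, hstrict z hz' hzx⟩
      · rw [map_add, bdOp_single, hcyc, zero_add]
    set w' : C → ZMod 2 := w + canCycle L f x with hw'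
    have hw'cyc : bdOp L w' = 0 := by
      rw [hw', map_add, hcyc, bdOp_cyc L f hf x hxb, add_zero]
    have hw'supp : ∀ z, w' z ≠ 0 → (z ∈ L.cells ∧ f z < b) ∧ f z < f x := by
      intro z hz
      by_cases hzx : z = x
      · exfalso
        apply hz
        have h1 : w x = 1 := (z2 (w x)).resolve_left hx
        have h2 : canCycle L f x x = 1 := cyc_self L f hf x hxb
        rw [hzx]
        show w x + canCycle L f x x = 0
        rw [h1, h2]
        decide
      · have : w z ≠ 0 ∨ canCycle L f x z ≠ 0 := by
          by_contra h
          push_neg at h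
          apply hz
          show w z + canCycle L f x z = 0
          rw [h.1, h.2, add_zero]
        rcases this with h | h
        · exact ⟨hsupp z h, hstrict z h hzx⟩
        · obtain ⟨h1, h2, _⟩ := cyc_supp L f hf x hxb z h
          have : f z < f x := lt_of_le_of_ne h2 (fun he => hzx (hf.1 z h1 x hxc he))
          exact ⟨⟨h1, lt_trans this hxlt⟩, this⟩
    have hcard' : (Finset.univ.filter (fun z => z ∈ L.cells ∧ ∃ y, w' y ≠ 0 ∧ f z ≤ f y)).card ≤ k := by
      have hsub : Finset.univ.filter (fun z => z ∈ L.cells ∧ ∃ y, w' y ≠ 0 ∧ f z ≤ f y)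
          ⊆ (Finset.univ.filter (fun z => z ∈ L.cells ∧ ∃ y, w y ≠ 0 ∧ f z ≤ f y)).erase x := by
        intro z hz
        simp only [Finset.mem_filter, Finset.mem_univ, true_and] at hz
        obtain ⟨hz1, y, hy1, hy2⟩ := hz
        have hylt : f y < f x := (hw'supp y hy1).2
        rw [Finset.mem_erase, Finset.mem_filter]
        refine ⟨?_, Finset.mem_univ z, hz1, x, hx, le_of_lt (lt_of_le_of_lt hy2 hylt)⟩
        intro h
        rw [h] at hy2
        exact absurd (lt_of_le_of_lt hy2 hylt) (lt_irrefl _)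
      have hxin : x ∈ Finset.univ.filter (fun z => z ∈ L.cells ∧ ∃ y, w y ≠ 0 ∧ f z ≤ f y) := by
        simp only [Finset.mem_filter, Finset.mem_univ, true_and]
        exact ⟨hxc, x, hx, le_refl _⟩
      calc _ ≤ ((Finset.univ.filter (fun z => z ∈ L.cells ∧ ∃ y, w y ≠ 0 ∧ f z ≤ f y)).erase x).card :=
            Finset.card_le_card hsub
        _ = _ - 1 := Finset.card_erase_of_mem hxin
        _ ≤ k := by omega
    obtain ⟨Bf', hBf's, hBf'e⟩ := ih w' hw'cyc (fun z hz => (hw'supp z hz).1) hcard'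
    have hxnot : x ∉ Bf' := by
      intro h
      obtain ⟨_, _, z, hz1, hz2⟩ := hBf's x h
      exact absurd (lt_of_le_of_lt hz2 (hw'supp z hz1).2) (lt_irrefl _)
    refine ⟨insert x Bf', ?_, ?_⟩
    · intro x' hx'
      rcases Finset.mem_insert.1 hx' with h | h
      · rw [h]
        exact ⟨hxb, hxlt, x, hx, le_refl _⟩
      · obtain ⟨h1, h2, z, hz1, hz2⟩ := hBf's x' h
        exact ⟨h1, h2, x, hx, le_of_lt (lt_of_le_of_lt hz2 (hw'supp z hz1).2)⟩
    · rw [Finset.sum_insert hxnot, ← hBf'e]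
      have : w' + canCycle L f x = w := by
        rw [hw', add_assoc]
        conv_rhs => rw [← add_zero w]
        congr 1
        exact fun2add _
      rw [← this]
      abel

end Machinery

end SP
namespace SP

variable {C : Type} [Fintype C] [DecidableEq C]

section Sorted

variable (L : LC C) (f : C → ℝ) (hf : IsFilter L f)

include hf in
lemma sortAux_spec : ∀ (n : ℕ) (S : Finset C), S ⊆ L.cells → S.card ≤ n →
    (sortAux f n S).toFinset = S ∧ (sortAux f n S).Pairwise (fun a b => f a < f b) := by
  intro n
  induction n with
  | zero =>
    intro S hS hcard
    have hE : S = ∅ := Finset.card_eq_zero.1 (Nat.le_zero.1 hcard)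
    subst hE
    exact ⟨rfl, List.Pairwise.nil⟩
  | succ n ih =>
    intro S hS hcard
    by_cases hne : S.Nonempty
    · have heq : sortAux f (n + 1) S
          = (Finset.exists_min_image S f hne).choose
            :: sortAux f n (S.erase (Finset.exists_min_image S f hne).choose) := by
        show (if h : S.Nonempty then _ else []) = _
        rw [dif_pos hne]
      obtain ⟨hmS, hmin⟩ := (Finset.exists_min_image S f hne).choose_spec
      set m := (Finset.exists_min_image S f hne).choose with hm
      have hsub : S.erase m ⊆ L.cells := fun z hz => hS (Finset.mem_of_mem_erase hz)
      have hcard' : (S.erase m).card ≤ n := by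
        rw [Finset.card_erase_of_mem hmS]
        omega
      obtain ⟨ih1, ih2⟩ := ih (S.erase m) hsub hcard'
      rw [heq]
      constructor
      · rw [List.toFinset_cons, ih1, Finset.insert_erase hmS]
      · rw [List.pairwise_cons]
        refine ⟨fun a ha => ?_, ih2⟩
        have haS : a ∈ S.erase m := by
          rw [← ih1]
          exact List.mem_toFinset.2 ha
        have h1 : f m ≤ f a := hmin a (Finset.mem_of_mem_erase haS)
        rcases lt_or_eq_of_le h1 with h | h
        · exact h
        · exact absurd (hf.1 m (hS hmS) a (hS (Finset.mem_of_mem_erase haS)) h).symm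
            (Finset.ne_of_mem_erase haS)
    · have hE : S = ∅ := Finset.not_nonempty_iff_eq_empty.1 hne
      subst hE
      have heq : sortAux f (n + 1) (∅ : Finset C) = [] := by
        show (if h : (∅ : Finset C).Nonempty then _ else []) = _
        rw [dif_neg hne]
      rw [heq]
      exact ⟨rfl, List.Pairwise.nil⟩

include hf in
lemma sortedCells_spec :
    (sortedCells L f).toFinset = L.cells ∧ (sortedCells L f).Pairwise (fun a b => f a < f b) :=
  sortAux_spec L f hf L.cells.card L.cells (le_refl _) (le_refl _)

end Sorted

section Expz

variable (L : LC C) (f : C → ℝ) (hf : IsFilter L f)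

include hf in
/-- expansion of any boundary below `b` as a sum of canonical-cycle sums of
deaths below `b`, given pairing data for all deaths below `b` -/
lemma expz (b : ℝ) (Afn : C → Finset C) (cfn : C → C → ZMod 2)
    (hpack : ∀ t, givesDeath L f t → f t < b →
      (∀ z, cfn t z ≠ 0 → z ∈ L.cells ∧ f z < f t) ∧
      bdOp L (cfn t) = col L t + ∑ x ∈ Afn t, canCycle L f x) :
    ∀ (k : ℕ) (c : C → ZMod 2),
      (∀ z, c z ≠ 0 → z ∈ L.cells ∧ f z < b) →
      (Finset.univ.filter (fun z => z ∈ L.cells ∧ ∃ y, c y ≠ 0 ∧ f z ≤ f y)).card ≤ k →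
      ∃ M : Finset C, (∀ t ∈ M, givesDeath L f t ∧ f t < b) ∧
        bdOp L c = ∑ t ∈ M, ∑ x ∈ Afn t, canCycle L f x := by
  have hcc : ∀ x, givesBirth L f x → f x < b →
      (∀ z, canChain L f x z ≠ 0 → f z < f x ∧ givesDeath L f z) ∧
      bdOp L (canChain L f x) = col L x := by
    intro x hx _
    exact canChain_spec L f hf x hx
  intro k
  induction k with
  | zero =>
    intro c hc hcard
    refine ⟨∅, by simp, ?_⟩
    rw [Finset.sum_empty]
    have hc0 : c = 0 := by
      funext z
      by_contra hz
      have hz' : c z ≠ 0 := by simpa using hz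
      have : z ∈ Finset.univ.filter (fun z => z ∈ L.cells ∧ ∃ y, c y ≠ 0 ∧ f z ≤ f y) := by
        simp only [Finset.mem_filter, Finset.mem_univ, true_and]
        exact ⟨(hc z hz').1, z, hz', le_refl _⟩
      rw [Finset.card_eq_zero.1 (Nat.le_zero.1 hcard)] at this
      exact absurd this (Finset.notMem_empty z)
    rw [hc0, map_zero]
  | succ k ih =>
    intro c hc hcard
    -- replace c by a death-supported chain
    obtain ⟨c₀, hc₀s, hc₀e⟩ := deathify L f hf b hcc
      (Finset.univ.filter (fun z => c z ≠ 0 ∧ givesBirth L f z)).card c hc (le_refl _)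
    by_cases h0 : c₀ = 0
    · refine ⟨∅, by simp, ?_⟩
      rw [Finset.sum_empty, ← hc₀e, h0, map_zero]
    -- expand as a sum of death columns
    have hexp : bdOp L c = ∑ t ∈ suppF c₀, col L t := by
      rw [← hc₀e, bdOp_suppF]
    -- each column of a death t rewrites as z-sum + boundary of its cfn
    have hcol : ∀ t ∈ suppF c₀,
        col L t = (∑ x ∈ Afn t, canCycle L f x) + bdOp L (cfn t) := by
      intro t ht
      obtain ⟨hd, hlt, _⟩ := hc₀s t ((mem_suppF c₀ t).1 ht)
      have := (hpack t hd hlt).2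
      rw [this]
      have habel : ∀ a b : C → ZMod 2, a + (a + b) = b + (a + a) := by
        intro a b
        abel
      calc col L t = col L t + ((∑ x ∈ Afn t, canCycle L f x) + (∑ x ∈ Afn t, canCycle L f x)) := by
            rw [fun2add, add_zero]
        _ = (∑ x ∈ Afn t, canCycle L f x) + (col L t + ∑ x ∈ Afn t, canCycle L f x) := by abel
    have hexp2 : bdOp L c
        = (∑ t ∈ suppF c₀, ∑ x ∈ Afn t, canCycle L f x) + bdOp L (∑ t ∈ suppF c₀, cfn t) := by
      rw [hexp, Finset.sum_congr rfl hcol, Finset.sum_add_distrib, map_sum]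
    -- recurse on the leftover chain
    set c₁ : C → ZMod 2 := ∑ t ∈ suppF c₀, cfn t with hc₁
    have hc₁s : ∀ z, c₁ z ≠ 0 → (z ∈ L.cells ∧ f z < b) ∧ ∃ t ∈ suppF c₀, f z < f t := by
      intro z hz
      have : ∃ t ∈ suppF c₀, cfn t z ≠ 0 := by
        by_contra hcon
        push_neg at hcon
        apply hz
        rw [hc₁, Finset.sum_apply]
        exact Finset.sum_eq_zero fun t ht => hcon t ht
      obtain ⟨t, ht, htz⟩ := this
      obtain ⟨hd, hlt, _⟩ := hc₀s t ((mem_suppF c₀ t).1 ht)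
      obtain ⟨hz1, hz2⟩ := (hpack t hd hlt).1 z htz
      exact ⟨⟨hz1, lt_trans hz2 hlt⟩, t, ht, hz2⟩
    -- the measure decreases
    have hcne : c ≠ 0 := by
      intro h
      apply h0
      funext z
      by_contra hz
      obtain ⟨_, _, w, hw, _⟩ := hc₀s z (by simpa using hz)
      rw [h] at hw
      exact hw rfl
    obtain ⟨wm, hw1, hw2⟩ := exists_max_supp f c hcne
    have hcard₁ : (Finset.univ.filter (fun z => z ∈ L.cells ∧ ∃ y, c₁ y ≠ 0 ∧ f z ≤ f y)).card ≤ k := by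
      have hsub : Finset.univ.filter (fun z => z ∈ L.cells ∧ ∃ y, c₁ y ≠ 0 ∧ f z ≤ f y)
          ⊆ (Finset.univ.filter (fun z => z ∈ L.cells ∧ ∃ y, c y ≠ 0 ∧ f z ≤ f y)).erase wm := by
        intro z hz
        simp only [Finset.mem_filter, Finset.mem_univ, true_and] at hz
        obtain ⟨hz1, y, hy1, hy2⟩ := hz
        obtain ⟨_, t, ht, hyt⟩ := hc₁s y hy1
        obtain ⟨_, _, w, hw, htw⟩ := hc₀s t ((mem_suppF c₀ t).1 ht)
        have hzlt : f z < f wm := by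
          calc f z ≤ f y := hy2
            _ < f t := hyt
            _ ≤ f w := htw
            _ ≤ f wm := hw2 w hw
        rw [Finset.mem_erase, Finset.mem_filter]
        refine ⟨?_, Finset.mem_univ z, hz1, wm, hw1, le_of_lt hzlt⟩
        intro h
        rw [h] at hzlt
        exact absurd hzlt (lt_irrefl _)
      have hin : wm ∈ Finset.univ.filter (fun z => z ∈ L.cells ∧ ∃ y, c y ≠ 0 ∧ f z ≤ f y) := by
        simp only [Finset.mem_filter, Finset.mem_univ, true_and]
        exact ⟨(hc wm hw1).1, wm, hw1, le_refl _⟩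
      calc _ ≤ ((Finset.univ.filter (fun z => z ∈ L.cells ∧ ∃ y, c y ≠ 0 ∧ f z ≤ f y)).erase wm).card :=
            Finset.card_le_card hsub
        _ = _ - 1 := Finset.card_erase_of_mem hin
        _ ≤ k := by omega
    obtain ⟨M₁, hM₁p, hM₁e⟩ := ih c₁ (fun z hz => (hc₁s z hz).1) hcard₁
    refine ⟨symmDiff M₁ (suppF c₀), ?_, ?_⟩
    · intro t ht
      rw [Finset.mem_symmDiff] at ht
      rcases ht with ⟨h, _⟩ | ⟨h, _⟩
      · exact hM₁p t h
      · obtain ⟨hd, hlt, _⟩ := hc₀s t ((mem_suppF c₀ t).1 h)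
        exact ⟨hd, hlt⟩
    · rw [sum_symmDiff' fun2add, ← hM₁e, hexp2]
      abel

end Expz

end SP
namespace SP

variable {C : Type} [Fintype C] [DecidableEq C]

section Steps

variable (L : LC C) (f : C → ℝ) (hf : IsFilter L f)
variable (P : Finset (C × C)) (U : Finset C) (y : C)

include hf in
lemma step_exists
    (hUmem : ∀ x, givesBirth L f x → f x < f y → (∀ q ∈ P, q.1 ≠ x) → x ∈ U)
    (hrelp : ∀ p ∈ P, f p.2 < f y ∧ givesDeath L f p.2 ∧ ∃ A c,
      (∀ x ∈ A, givesBirth L f x ∧ f x ≤ f p.1) ∧ p.1 ∈ A ∧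
      (∀ z, c z ≠ 0 → z ∈ L.cells ∧ f z < f p.2) ∧
      bdOp L c = col L p.2 + ∑ x ∈ A, canCycle L f x) :
    ∃ A, A ⊆ U ∧ ∃ c, (∀ z, c z ≠ 0 → z ∈ L.cells ∧ f z < f y) ∧
      bdOp L c = (∑ x ∈ A, canCycle L f x) + col L y := by
  classical
  have hred : ∀ (k : ℕ) (W : Finset C), (∀ x ∈ W, givesBirth L f x ∧ f x < f y) →
      (Finset.univ.filter (fun z => (∃ q ∈ P, q.1 = z) ∧
        ∃ w ∈ W, (∃ q ∈ P, q.1 = w) ∧ f z ≤ f w)).card ≤ k →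
      ∃ A, A ⊆ U ∧ ∃ c, (∀ z, c z ≠ 0 → z ∈ L.cells ∧ f z < f y) ∧
        bdOp L c = (∑ x ∈ W, canCycle L f x) + ∑ x ∈ A, canCycle L f x := by
    intro k
    induction k with
    | zero =>
      intro W hW hcard
      have hnp : ∀ x ∈ W, ∀ q ∈ P, q.1 ≠ x := by
        intro x hxW q hq hq1
        have : x ∈ Finset.univ.filter (fun z => (∃ q ∈ P, q.1 = z) ∧
            ∃ w ∈ W, (∃ q ∈ P, q.1 = w) ∧ f z ≤ f w) := by
          simp only [Finset.mem_filter, Finset.mem_univ, true_and]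
          exact ⟨⟨q, hq, hq1⟩, x, hxW, ⟨q, hq, hq1⟩, le_refl _⟩
        rw [Finset.card_eq_zero.1 (Nat.le_zero.1 hcard)] at this
        exact absurd this (Finset.notMem_empty x)
      refine ⟨W, fun x hx => hUmem x (hW x hx).1 (hW x hx).2 (hnp x hx), 0, by simp, ?_⟩
      rw [map_zero, fun2add]
    | succ k ih =>
      intro W hW hcard
      by_cases hWp : ∃ x ∈ W, ∃ q ∈ P, q.1 = x
      · have hne : (W.filter (fun x => ∃ q ∈ P, q.1 = x)).Nonempty := by
          obtain ⟨x, hx1, hx2⟩ := hWp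
          exact ⟨x, Finset.mem_filter.2 ⟨hx1, hx2⟩⟩
        obtain ⟨xm, hxm, hxmax⟩ := Finset.exists_max_image _ f hne
        rw [Finset.mem_filter] at hxm
        obtain ⟨hxmW, q₀, hq₀P, hq₀1⟩ := hxm
        obtain ⟨hq₀y, hq₀d, A₀, c₀, hA₀b, hA₀mem, hc₀s, hc₀e⟩ := hrelp q₀ hq₀P
        rw [hq₀1] at hA₀mem hA₀b
        have hxmb : givesBirth L f xm := (hW xm hxmW).1
        have hxmy : f xm < f y := (hW xm hxmW).2
        -- Σ_{A₀} cyc is a boundary below y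
        set d : C → ZMod 2 := (Pi.single q₀.2 1 : C → ZMod 2) + c₀ with hd
        have hde : bdOp L d = ∑ x ∈ A₀, canCycle L f x := by
          rw [hd, map_add, bdOp_single, hc₀e, ← add_assoc, fun2add, zero_add]
        have hds : ∀ z, d z ≠ 0 → z ∈ L.cells ∧ f z < f y := by
          intro z hz
          by_cases hzt : z = q₀.2
          · rw [hzt]
            exact ⟨hq₀d.1, hq₀y⟩
          · have hz' : c₀ z ≠ 0 := by
              intro h0
              apply hz
              rw [hd]
              show (Pi.single q₀.2 1 : C → ZMod 2) z + c₀ z = 0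
              rw [Pi.single_eq_of_ne hzt, h0, add_zero]
            exact ⟨(hc₀s z hz').1, lt_trans (hc₀s z hz').2 hq₀y⟩
        -- strictness of the maximum
        have hstrict : ∀ w ∈ symmDiff W A₀, (∃ q ∈ P, q.1 = w) → f w < f xm := by
          intro w hw hwpair
          rw [Finset.mem_symmDiff] at hw
          rcases hw with ⟨hw1, hw2⟩ | ⟨hw1, hw2⟩
          · have hle : f w ≤ f xm := hxmax w (Finset.mem_filter.2 ⟨hw1, hwpair⟩)
            rcases lt_or_eq_of_le hle with h | h
            · exact h
            · exact absurd (hf.1 w (hW w hw1).1.1 xm hxmb.1 h ▸ hA₀mem) hw2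
          · have hle : f w ≤ f xm := (hA₀b w hw1).2
            rcases lt_or_eq_of_le hle with h | h
            · exact h
            · exact absurd (hf.1 w (hA₀b w hw1).1.1 xm hxmb.1 h ▸ hxmW) hw2
        have hW'p : ∀ x ∈ symmDiff W A₀, givesBirth L f x ∧ f x < f y := by
          intro x hx
          rw [Finset.mem_symmDiff] at hx
          rcases hx with ⟨h, _⟩ | ⟨h, _⟩
          · exact hW x h
          · exact ⟨(hA₀b x h).1, lt_of_le_of_lt (hA₀b x h).2 hxmy⟩
        have hcard' : (Finset.univ.filter (fun z => (∃ q ∈ P, q.1 = z) ∧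
            ∃ w ∈ symmDiff W A₀, (∃ q ∈ P, q.1 = w) ∧ f z ≤ f w)).card ≤ k := by
          have hsub : Finset.univ.filter (fun z => (∃ q ∈ P, q.1 = z) ∧
              ∃ w ∈ symmDiff W A₀, (∃ q ∈ P, q.1 = w) ∧ f z ≤ f w)
              ⊆ (Finset.univ.filter (fun z => (∃ q ∈ P, q.1 = z) ∧
                ∃ w ∈ W, (∃ q ∈ P, q.1 = w) ∧ f z ≤ f w)).erase xm := by
            intro z hz
            simp only [Finset.mem_filter, Finset.mem_univ, true_and] at hz
            obtain ⟨hz1, w, hw1, hw2, hw3⟩ := hz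
            have hwlt : f w < f xm := hstrict w hw1 hw2
            have hzlt : f z < f xm := lt_of_le_of_lt hw3 hwlt
            rw [Finset.mem_erase, Finset.mem_filter]
            refine ⟨?_, Finset.mem_univ z, hz1, xm, hxmW, ⟨q₀, hq₀P, hq₀1⟩, le_of_lt hzlt⟩
            intro h
            rw [h] at hzlt
            exact absurd hzlt (lt_irrefl _)
          have hin : xm ∈ Finset.univ.filter (fun z => (∃ q ∈ P, q.1 = z) ∧
              ∃ w ∈ W, (∃ q ∈ P, q.1 = w) ∧ f z ≤ f w) := by
            simp only [Finset.mem_filter, Finset.mem_univ, true_and]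
            exact ⟨⟨q₀, hq₀P, hq₀1⟩, xm, hxmW, ⟨q₀, hq₀P, hq₀1⟩, le_refl _⟩
          calc _ ≤ ((Finset.univ.filter (fun z => (∃ q ∈ P, q.1 = z) ∧
                ∃ w ∈ W, (∃ q ∈ P, q.1 = w) ∧ f z ≤ f w)).erase xm).card :=
                Finset.card_le_card hsub
            _ = _ - 1 := Finset.card_erase_of_mem hin
            _ ≤ k := by omega
        obtain ⟨A, hAU, c', hc's, hc'e⟩ := ih (symmDiff W A₀) hW'p hcard'
        refine ⟨A, hAU, c' + d, ?_, ?_⟩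
        · intro z hz
          have : c' z ≠ 0 ∨ d z ≠ 0 := by
            by_contra h
            push_neg at h
            apply hz
            show c' z + d z = 0
            rw [h.1, h.2, add_zero]
          rcases this with h | h
          · exact hc's z h
          · exact hds z h
        · rw [map_add, hc'e, hde, sum_symmDiff' fun2add]
          have habel : ∀ a b c : C → ZMod 2, ((a + b) + c) + b = (a + c) + (b + b) := by
            intro a b c
            abel
          rw [habel, fun2add, add_zero]
      · push_neg at hWp
        refine ⟨W, fun x hx => hUmem x (hW x hx).1 (hW x hx).2
          (fun q hq => hWp x hx q hq), 0, by simp, ?_⟩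
        rw [map_zero, fun2add]
  have hcyc : bdOp L (col L y) = 0 := bdOp_col L y
  have hsupp : ∀ z, col L y z ≠ 0 → z ∈ L.cells ∧ f z < f y := by
    intro z hz
    exact ⟨(L.bd_mem z y hz).1, hf.2 z y hz⟩
  obtain ⟨W, hWp, hWe⟩ := cycdec L f hf (f y)
    (Finset.univ.filter (fun z => z ∈ L.cells ∧ ∃ y', col L y y' ≠ 0 ∧ f z ≤ f y')).card
    (col L y) hcyc hsupp (le_refl _)
  obtain ⟨A, hAU, c, hcs, hce⟩ := hred
    (Finset.univ.filter (fun z => (∃ q ∈ P, q.1 = z) ∧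
      ∃ w ∈ W, (∃ q ∈ P, q.1 = w) ∧ f z ≤ f w)).card
    W (fun x hx => ⟨(hWp x hx).1, (hWp x hx).2.1⟩) (le_refl _)
  refine ⟨A, hAU, c, hcs, ?_⟩
  rw [hce, ← hWe, add_comm]

include hf in
lemma step_unique
    (Afn : C → Finset C) (cfn : C → C → ZMod 2) (sfn : C → C)
    (hpack : ∀ t, givesDeath L f t → f t < f y →
      (sfn t, t) ∈ P ∧ sfn t ∈ Afn t ∧
      (∀ x ∈ Afn t, givesBirth L f x ∧ f x ≤ f (sfn t)) ∧
      (∀ z, cfn t z ≠ 0 → z ∈ L.cells ∧ f z < f t) ∧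
      bdOp L (cfn t) = col L t + ∑ x ∈ Afn t, canCycle L f x)
    (hU2 : ∀ x ∈ U, givesBirth L f x ∧ ∀ q ∈ P, q.1 ≠ x)
    (hPfst : ∀ p ∈ P, ∀ q ∈ P, p.1 = q.1 → p = q)
    (A₁ A₂ : Finset C) (h₁U : A₁ ⊆ U) (h₂U : A₂ ⊆ U)
    (c₁ c₂ : C → ZMod 2)
    (hc₁s : ∀ z, c₁ z ≠ 0 → z ∈ L.cells ∧ f z < f y)
    (hc₂s : ∀ z, c₂ z ≠ 0 → z ∈ L.cells ∧ f z < f y)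
    (hc₁e : bdOp L c₁ = (∑ x ∈ A₁, canCycle L f x) + col L y)
    (hc₂e : bdOp L c₂ = (∑ x ∈ A₂, canCycle L f x) + col L y) :
    A₁ = A₂ := by
  classical
  have hDkey : bdOp L (c₁ + c₂) = ∑ x ∈ symmDiff A₁ A₂, canCycle L f x := by
    rw [map_add, hc₁e, hc₂e, sum_symmDiff' fun2add]
    have habel : ∀ a b c : C → ZMod 2, (a + c) + (b + c) = (a + b) + (c + c) := by
      intro a b c
      abel
    rw [habel, fun2add, add_zero]
  have hsupp12 : ∀ z, (c₁ + c₂) z ≠ 0 → z ∈ L.cells ∧ f z < f y := by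
    intro z hz
    have : c₁ z ≠ 0 ∨ c₂ z ≠ 0 := by
      by_contra h
      push_neg at h
      apply hz
      show c₁ z + c₂ z = 0
      rw [h.1, h.2, add_zero]
    rcases this with h | h
    · exact hc₁s z h
    · exact hc₂s z h
  obtain ⟨M, hMp, hMe⟩ := expz L f hf (f y) Afn cfn
    (fun t ht hlt => ⟨(hpack t ht hlt).2.2.2.1, (hpack t ht hlt).2.2.2.2⟩)
    (Finset.univ.filter (fun z => z ∈ L.cells ∧ ∃ y', (c₁ + c₂) y' ≠ 0 ∧ f z ≤ f y')).card
    (c₁ + c₂) hsupp12 (le_refl _)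
  have hDM : ∑ x ∈ symmDiff A₁ A₂, canCycle L f x = ∑ t ∈ M, ∑ x ∈ Afn t, canCycle L f x := by
    rw [← hDkey, hMe]
  have hDU : symmDiff A₁ A₂ ⊆ U := by
    intro x hx
    rw [Finset.mem_symmDiff] at hx
    rcases hx with ⟨h, _⟩ | ⟨h, _⟩
    · exact h₁U h
    · exact h₂U h
  have hDb : ∀ x ∈ symmDiff A₁ A₂, givesBirth L f x := fun x hx => (hU2 x (hDU hx)).1
  have hDempty : symmDiff A₁ A₂ = ∅ := by
    by_contra hne
    obtain ⟨dd, hdd⟩ := Finset.nonempty_iff_ne_empty.2 hne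
    by_cases hM0 : M = ∅
    · have := congrFun hDM dd
      rw [hM0, Finset.sum_empty] at this
      rw [sumcyc_coeff L f hf _ hDb dd (hDb dd hdd), if_pos hdd] at this
      simp at this
    · obtain ⟨Mne⟩ : Nonempty { t // t ∈ M } := by
        obtain ⟨t, ht⟩ := Finset.nonempty_iff_ne_empty.2 hM0
        exact ⟨⟨t, ht⟩⟩
      obtain ⟨tm, htmM, htmax⟩ := Finset.exists_max_image M (fun t => f (sfn t))
        (Finset.nonempty_iff_ne_empty.2 hM0)
      obtain ⟨htd, htlt⟩ := hMp tm htmM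
      obtain ⟨htP, htmem, htAb, _, _⟩ := hpack tm htd htlt
      have hsb : givesBirth L f (sfn tm) := (htAb (sfn tm) htmem).1
      -- coefficient of sfn tm on both sides
      have hcoeff := congrFun hDM (sfn tm)
      rw [sumcyc_coeff L f hf _ hDb (sfn tm) hsb] at hcoeff
      have hterm : ∀ t ∈ M, (∑ x ∈ Afn t, canCycle L f x) (sfn tm)
          = if t = tm then 1 else 0 := by
        intro t ht
        obtain ⟨htd', htlt'⟩ := hMp t ht
        obtain ⟨htP', htmem', htAb', _, _⟩ := hpack t htd' htlt'
        rw [sumcyc_coeff L f hf _ (fun x hx => (htAb' x hx).1) (sfn tm) hsb]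
        by_cases httm : t = tm
        · rw [if_pos httm, if_pos]
          rw [httm]
          exact htmem
        · rw [if_neg httm, if_neg]
          intro hmem
          have h1 : f (sfn tm) ≤ f (sfn t) := (htAb' (sfn tm) hmem).2
          have h2 : f (sfn t) ≤ f (sfn tm) := htmax t ht
          have h3 : sfn t = sfn tm :=
            hf.1 (sfn t) ((htAb' (sfn t) htmem').1).1 (sfn tm) hsb.1 (le_antisymm h2 h1)
          have h4 : (sfn t, t) = (sfn tm, tm) := hPfst _ htP' _ htP h3
          exact httm (congrArg Prod.snd h4)
      rw [Finset.sum_apply, Finset.sum_congr rfl hterm,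
        Finset.sum_ite_eq' M tm (fun _ => (1 : ZMod 2)), if_pos htmM] at hcoeff
      -- sfn tm would be unpaired, contradiction
      by_cases hin : sfn tm ∈ symmDiff A₁ A₂
      · exact (hU2 (sfn tm) (hDU hin)).2 (sfn tm, tm) htP rfl
      · rw [if_neg hin] at hcoeff
        simp at hcoeff
  have := symmDiff_eq_bot.1 hDempty
  exact this

end Steps

end SP
namespace SP

variable {C : Type} [Fintype C] [DecidableEq C]

section Fold

variable (L : LC C) (f : C → ℝ)

structure Inv (ps : Finset C) (st : Finset C × Finset (C × C)) : Prop where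
  hU : ∀ x ∈ st.1, x ∈ ps ∧ givesBirth L f x
  hUc : ∀ x ∈ ps, givesBirth L f x → (x ∈ st.1 ↔ ∀ q ∈ st.2, q.1 ≠ x)
  hP : ∀ p ∈ st.2, p.1 ∈ ps ∧ p.2 ∈ ps ∧ givesBirth L f p.1 ∧ givesDeath L f p.2 ∧ f p.1 < f p.2
  hD : ∀ t ∈ ps, givesDeath L f t → ∃ s, (s, t) ∈ st.2
  hinj2 : ∀ p ∈ st.2, ∀ q ∈ st.2, (p.1 = q.1 ∨ p.2 = q.2) → p = q
  hrel : ∀ p ∈ st.2, ∃ A c,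
    (∀ x ∈ A, givesBirth L f x ∧ f x ≤ f p.1 ∧ ∀ q ∈ st.2, q.1 = x → f p.2 ≤ f q.2) ∧
    p.1 ∈ A ∧
    (∀ z, c z ≠ 0 → z ∈ L.cells ∧ f z < f p.2) ∧
    bdOp L c = col L p.2 + ∑ x ∈ A, canCycle L f x

variable (hf : IsFilter L f)

include hf in
lemma inv_step (ps : Finset C) (st : Finset C × Finset (C × C)) (y : C)
    (hyc : y ∈ L.cells) (hynot : y ∉ ps)
    (hps : ps = L.cells.filter (fun z => f z < f y))
    (inv : Inv L f ps st) :
    Inv L f (insert y ps) (pairStep L f st y) := by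
  classical
  have hpslt : ∀ z ∈ ps, f z < f y := by
    intro z hz
    rw [hps, Finset.mem_filter] at hz
    exact hz.2
  by_cases hb : givesBirth L f y
  · -- birth case
    have hstep : pairStep L f st y = (insert y st.1, st.2) := by
      unfold pairStep
      rw [if_pos hb]
    rw [hstep]
    refine ⟨?_, ?_, ?_, ?_, ?_, ?_⟩
    · intro x hx
      rcases Finset.mem_insert.1 hx with h | h
      · rw [h]
        exact ⟨Finset.mem_insert_self y ps, hb⟩
      · exact ⟨Finset.mem_insert_of_mem (inv.hU x h).1, (inv.hU x h).2⟩
    · intro x hx hbx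
      rcases Finset.mem_insert.1 hx with h | h
      · subst h
        constructor
        · intro _ q hq
          intro h1
          exact hynot ((h1 ▸ (inv.hP q hq).1))
        · intro _
          exact Finset.mem_insert_self x st.1
      · rw [Finset.mem_insert]
        have hxy : x ≠ y := fun he => hynot (he ▸ h)
        rw [or_iff_right hxy]
        exact inv.hUc x h hbx
    · intro p hp
      obtain ⟨h1, h2, h3, h4, h5⟩ := inv.hP p hp
      exact ⟨Finset.mem_insert_of_mem h1, Finset.mem_insert_of_mem h2, h3, h4, h5⟩
    · intro t ht htd
      rcases Finset.mem_insert.1 ht with h | h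
      · subst h
        exact absurd ⟨hb, htd⟩ (not_birth_and_death L f t)
      · exact inv.hD t h htd
    · exact inv.hinj2
    · exact inv.hrel
  · -- death case
    have hd : givesDeath L f y := (birth_or_death L f y hyc).resolve_left hb
    -- the unique set A exists
    have hex : ∃ A, A ⊆ st.1 ∧ HomBelow L f (f y) (∑ x ∈ A, canCycle L f x) (col L y) := by
      obtain ⟨A, hAU, c, hcs, hce⟩ := step_exists L f hf st.2 st.1 y
        (fun x hbx hfx hnp => by
          have hxps : x ∈ ps := by
            rw [hps, Finset.mem_filter]
            exact ⟨hbx.1, hfx⟩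
          exact (inv.hUc x hxps hbx).2 hnp)
        (fun p hp => by
          obtain ⟨h1, h2, h3, h4, h5⟩ := inv.hP p hp
          obtain ⟨A', c', hA', hmem', hcs', hce'⟩ := inv.hrel p hp
          exact ⟨hpslt p.2 h2, h4, A', c',
            fun x hx => ⟨(hA' x hx).1, (hA' x hx).2.1⟩, hmem', hcs', hce'⟩)
      exact ⟨A, hAU, c, hcs, hce⟩
    have huniq : ∀ A₁ A₂, (A₁ ⊆ st.1 ∧ HomBelow L f (f y) (∑ x ∈ A₁, canCycle L f x) (col L y)) →
        (A₂ ⊆ st.1 ∧ HomBelow L f (f y) (∑ x ∈ A₂, canCycle L f x) (col L y)) → A₁ = A₂ := by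
      intro A₁ A₂ ⟨h₁U, c₁, hc₁s, hc₁e⟩ ⟨h₂U, c₂, hc₂s, hc₂e⟩
      -- skolemize the pair data
      have hrelf : ∀ t, ∃ s A c, givesDeath L f t → f t < f y →
          ((s, t) ∈ st.2 ∧ s ∈ A ∧
           (∀ x ∈ A, givesBirth L f x ∧ f x ≤ f s) ∧
           (∀ z, c z ≠ 0 → z ∈ L.cells ∧ f z < f t) ∧
           bdOp L c = col L t + ∑ x ∈ A, canCycle L f x) := by
        intro t
        by_cases hc : givesDeath L f t ∧ f t < f y
        · have htps : t ∈ ps := by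
            rw [hps, Finset.mem_filter]
            exact ⟨hc.1.1, hc.2⟩
          obtain ⟨s, hst⟩ := inv.hD t htps hc.1
          obtain ⟨A, c, hA, hmem, hcs, hce⟩ := inv.hrel (s, t) hst
          exact ⟨s, A, c, fun _ _ => ⟨hst, hmem,
            fun x hx => ⟨(hA x hx).1, (hA x hx).2.1⟩, hcs, hce⟩⟩
        · exact ⟨t, ∅, 0, fun h1 h2 => absurd ⟨h1, h2⟩ hc⟩
      choose sfn Afn cfn hrelf' using hrelf
      exact step_unique L f hf st.2 st.1 y Afn cfn sfn
        (fun t ht hlt => hrelf' t ht hlt)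
        (fun x hx => ⟨(inv.hU x hx).2, fun q hq =>
          (inv.hUc x (inv.hU x hx).1 (inv.hU x hx).2).1 hx q hq⟩)
        (fun p hp q hq h => inv.hinj2 p hp q hq (Or.inl h))
        A₁ A₂ h₁U h₂U c₁ c₂ hc₁s hc₂s hc₁e hc₂e
    have hEU : ∃! A, A ⊆ st.1 ∧ HomBelow L f (f y) (∑ x ∈ A, canCycle L f x) (col L y) := by
      obtain ⟨A, hA⟩ := hex
      exact ⟨A, hA, fun A' hA' => huniq A' A hA' hA⟩
    have hA₀spec := hEU.exists.choose_spec
    set A₀ := hEU.exists.choose with hA₀def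
    obtain ⟨hA₀U, hA₀hom⟩ := hA₀spec
    have hA₀ne : A₀.Nonempty := by
      rw [Finset.nonempty_iff_ne_empty]
      intro h0
      apply hb
      obtain ⟨c, hcs, hce⟩ := hA₀hom
      rw [h0, Finset.sum_empty, zero_add] at hce
      exact ⟨hyc, c, hcs, hce⟩
    have hmaxeq : maxCellD f A₀ y = (Finset.exists_max_image A₀ f hA₀ne).choose := by
      unfold maxCellD
      rw [dif_pos hA₀ne]
    have hs₀spec := (Finset.exists_max_image A₀ f hA₀ne).choose_spec
    set s₀ := (Finset.exists_max_image A₀ f hA₀ne).choose with hs₀def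
    obtain ⟨hs₀A, hs₀max⟩ := hs₀spec
    have hstep : pairStep L f st y = (st.1.erase (maxCellD f A₀ y),
        insert (maxCellD f A₀ y, y) st.2) := by
      unfold pairStep
      rw [if_neg hb]
      simp only []
      rw [dif_pos hEU]
    rw [hstep, hmaxeq]
    -- basic facts about s₀
    have hs₀U : s₀ ∈ st.1 := hA₀U hs₀A
    have hs₀ps : s₀ ∈ ps := (inv.hU s₀ hs₀U).1
    have hs₀b : givesBirth L f s₀ := (inv.hU s₀ hs₀U).2
    have hs₀y : f s₀ < f y := hpslt s₀ hs₀ps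
    have hs₀unp : ∀ q ∈ st.2, q.1 ≠ s₀ := (inv.hUc s₀ hs₀ps hs₀b).1 hs₀U
    have hyps : ∀ p ∈ st.2, p.1 ≠ y ∧ p.2 ≠ y := by
      intro p hp
      constructor
      · intro h
        exact hynot (h ▸ (inv.hP p hp).1)
      · intro h
        exact hynot (h ▸ (inv.hP p hp).2.1)
    refine ⟨?_, ?_, ?_, ?_, ?_, ?_⟩
    · -- hU
      intro x hx
      have hx1 := Finset.mem_of_mem_erase hx
      exact ⟨Finset.mem_insert_of_mem (inv.hU x hx1).1, (inv.hU x hx1).2⟩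
    · -- hUc
      intro x hx hbx
      have hxps : x ∈ ps := by
        rcases Finset.mem_insert.1 hx with h | h
        · exact absurd (h ▸ hbx) (fun hby => not_birth_and_death L f y ⟨hby, hd⟩)
        · exact h
      constructor
      · intro hxU' q hq
        rcases Finset.mem_insert.1 hq with h | h
        · rw [h]
          intro h1
          exact Finset.ne_of_mem_erase hxU' h1.symm
        · exact (inv.hUc x hxps hbx).1 (Finset.mem_of_mem_erase hxU') q h
      · intro hall
        refine Finset.mem_erase.2 ⟨?_, ?_⟩
        · intro h
          exact hall (s₀, y) (Finset.mem_insert_self _ _) (by rw [h])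
        · exact (inv.hUc x hxps hbx).2 fun q hq => hall q (Finset.mem_insert_of_mem hq)
    · -- hP
      intro p hp
      rcases Finset.mem_insert.1 hp with h | h
      · rw [h]
        exact ⟨Finset.mem_insert_of_mem hs₀ps, Finset.mem_insert_self y ps, hs₀b, hd, hs₀y⟩
      · obtain ⟨h1, h2, h3, h4, h5⟩ := inv.hP p h
        exact ⟨Finset.mem_insert_of_mem h1, Finset.mem_insert_of_mem h2, h3, h4, h5⟩
    · -- hD
      intro t ht htd
      rcases Finset.mem_insert.1 ht with h | h
      · exact ⟨s₀, by rw [h]; exact Finset.mem_insert_self _ _⟩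
      · obtain ⟨s, hs⟩ := inv.hD t h htd
        exact ⟨s, Finset.mem_insert_of_mem hs⟩
    · -- hinj2
      intro p hp q hq hor
      rcases Finset.mem_insert.1 hp with h1 | h1 <;> rcases Finset.mem_insert.1 hq with h2 | h2
      · rw [h1, h2]
      · exfalso
        rcases hor with h | h
        · exact hs₀unp q h2 (by rw [← h, h1])
        · exact (hyps q h2).2 (by rw [← h, h1])
      · exfalso
        rcases hor with h | h
        · exact hs₀unp p h1 (by rw [h, h2])
        · exact (hyps p h1).2 (by rw [h, h2])
      · exact inv.hinj2 p h1 q h2 hor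
    · -- hrel
      intro p hp
      rcases Finset.mem_insert.1 hp with h | h
      · -- the new pair
        obtain ⟨c, hcs, hce⟩ := hA₀hom
        rw [h]
        refine ⟨A₀, c, ?_, hs₀A, hcs, by rw [hce, add_comm]⟩
        intro x hx
        have hxU : x ∈ st.1 := hA₀U hx
        refine ⟨(inv.hU x hxU).2, hs₀max x hx, ?_⟩
        intro q hq hq1
        rcases Finset.mem_insert.1 hq with h2 | h2
        · rw [h2]
        · exact absurd hq1 ((inv.hUc x (inv.hU x hxU).1 (inv.hU x hxU).2).1 hxU q h2)
      · -- old pairs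
        obtain ⟨A, c, hA, hmem, hcs, hce⟩ := inv.hrel p h
        refine ⟨A, c, ?_, hmem, hcs, hce⟩
        intro x hx
        refine ⟨(hA x hx).1, (hA x hx).2.1, ?_⟩
        intro q hq hq1
        rcases Finset.mem_insert.1 hq with h2 | h2
        · rw [h2]
          exact le_of_lt (hpslt p.2 (inv.hP p h).2.1)
        · exact (hA x hx).2.2 q h2 hq1
    
include hf in
lemma fold_inv : ∀ (rest done : List C) (st : Finset C × Finset (C × C)),
    sortedCells L f = done ++ rest →
    Inv L f done.toFinset st →
    Inv L f (sortedCells L f).toFinset (rest.foldl (pairStep L f) st) := by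
  intro rest
  induction rest with
  | nil =>
    intro done st hsplit inv
    rw [List.foldl_nil]
    rw [hsplit, List.append_nil]
    exact inv
  | cons y rest' ih =>
    intro done st hsplit inv
    obtain ⟨hsort1, hsort2⟩ := sortedCells_spec L f hf
    rw [hsplit] at hsort1 hsort2
    have hpw := (List.pairwise_append.1 hsort2)
    have hyc : y ∈ L.cells := by
      rw [← hsort1]
      simp
    have hynot : y ∉ done.toFinset := by
      rw [List.mem_toFinset]
      intro h
      exact absurd (hpw.2.2 y h y (by simp)) (lt_irrefl (f y))
    have hps : done.toFinset = L.cells.filter (fun z => f z < f y) := by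
      ext z
      rw [List.mem_toFinset, Finset.mem_filter]
      constructor
      · intro hz
        constructor
        · rw [← hsort1]
          simp [hz]
        · exact hpw.2.2 z hz y (by simp)
      · rintro ⟨hz1, hz2⟩
        have : z ∈ done ++ y :: rest' := by
          rw [← List.mem_toFinset, hsort1]
          exact hz1
        rcases List.mem_append.1 this with h | h
        · exact h
        · rcases List.mem_cons.1 h with h' | h'
          · rw [h'] at hz2
            exact absurd hz2 (lt_irrefl _)
          · have := (List.pairwise_cons.1 hpw.2.1).1 z h'
            exact absurd (lt_trans hz2 this) (lt_irrefl _)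
    have hstep := inv_step L f hf done.toFinset st y hyc hynot hps inv
    rw [List.foldl_cons]
    have happ : sortedCells L f = (done ++ [y]) ++ rest' := by
      rw [hsplit, List.append_assoc]
      rfl
    have hins : (done ++ [y]).toFinset = insert y done.toFinset := by
      simp [List.toFinset_append]
    have := ih (done ++ [y]) (pairStep L f st y) happ (by rw [hins]; exact hstep)
    exact this

include hf in
lemma final_inv : Inv L f L.cells (pairState L f) := by
  have h0 : Inv L f ([] : List C).toFinset (∅, ∅) := by
    refine ⟨?_, ?_, ?_, ?_, ?_, ?_⟩ <;> simp
  have := fold_inv L f hf (sortedCells L f) [] (∅, ∅) rfl h0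
  rw [(sortedCells_spec L f hf).1] at this
  exact this

end Fold

end SP
namespace SP

variable {C : Type} [Fintype C] [DecidableEq C]

section Base

variable (L : LC C) (f : C → ℝ) (hf : IsFilter L f)

include hf in
theorem base_cert : Nonempty (Cert L f (BD L f)) := by
  classical
  have iv : Inv L f L.cells (pairState L f) := final_inv L f hf
  have hBD : BD L f = (pairState L f).2 := rfl
  -- skolemize the pairing data, keyed by the death cell
  have hall : ∀ t, ∃ s A c, givesDeath L f t →
      ((s, t) ∈ (pairState L f).2 ∧ s ∈ A ∧
       (∀ x ∈ A, givesBirth L f x ∧ f x ≤ f s) ∧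
       (∀ z, c z ≠ 0 → z ∈ L.cells ∧ f z < f t) ∧
       bdOp L c = col L t + ∑ x ∈ A, canCycle L f x) := by
    intro t
    by_cases hd : givesDeath L f t
    · obtain ⟨s, hst⟩ := iv.hD t hd.1 hd
      obtain ⟨A, c, hA, hmem, hcs, hce⟩ := iv.hrel (s, t) hst
      exact ⟨s, A, c, fun _ => ⟨hst, hmem,
        fun x hx => ⟨(hA x hx).1, (hA x hx).2.1⟩, hcs, hce⟩⟩
    · exact ⟨t, ∅, 0, fun h => absurd h hd⟩
  choose sfn Afn cfn hall' using hall
  -- the Ms sets via boundary expansion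
  have hMall : ∀ t, ∃ M : Finset C, givesDeath L f t →
      ((∀ t' ∈ M, givesDeath L f t' ∧ f t' < f t) ∧
       bdOp L (cfn t) = ∑ t' ∈ M, ∑ x ∈ Afn t', canCycle L f x) := by
    intro t
    by_cases hd : givesDeath L f t
    · obtain ⟨_, _, _, hcs, hce⟩ := hall' t hd
      obtain ⟨M, hM1, hM2⟩ := expz L f hf (f t) Afn cfn
        (fun t' hd' _ => ⟨(hall' t' hd').2.2.2.1, (hall' t' hd').2.2.2.2⟩)
        (Finset.univ.filter (fun z => z ∈ L.cells ∧ ∃ y, cfn t y ≠ 0 ∧ f z ≤ f y)).card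
        (cfn t) hcs (le_refl _)
      exact ⟨M, fun _ => ⟨hM1, hM2⟩⟩
    · exact ⟨∅, fun h => absurd h hd⟩
  choose Msf hMall' using hMall
  -- the Ns sets via boundary expansion of canonical chains
  have hNall : ∀ x, ∃ N : Finset C, givesBirth L f x →
      ((∀ t' ∈ N, givesDeath L f t' ∧ f t' < f x) ∧
       col L x = ∑ t' ∈ N, ∑ x' ∈ Afn t', canCycle L f x') := by
    intro x
    by_cases hb : givesBirth L f x
    · obtain ⟨hcs, hce⟩ := canChain_spec L f hf x hb
      obtain ⟨N, hN1, hN2⟩ := expz L f hf (f x) Afn cfn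
        (fun t' hd' _ => ⟨(hall' t' hd').2.2.2.1, (hall' t' hd').2.2.2.2⟩)
        (Finset.univ.filter (fun z => z ∈ L.cells ∧ ∃ y, canChain L f x y ≠ 0 ∧ f z ≤ f y)).card
        (canChain L f x) (fun z hz => ⟨((hcs z hz).2).1, (hcs z hz).1⟩) (le_refl _)
      exact ⟨N, fun _ => ⟨hN1, by rw [← hce, hN2]⟩⟩
    · exact ⟨∅, fun h => absurd h hb⟩
  choose Nsf hNall' using hNall
  refine ⟨{
    Bs := L.cells.filter (fun x => givesBirth L f x)
    v := canCycle L f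
    As := Afn
    Ms := Msf
    Ns := Nsf
    hfi := hf.1
    hBc := Finset.filter_subset _ _
    hJ := ?_, hcov := ?_, hfst := ?_, hsnd := ?_, hv1 := ?_, hvs := ?_
    hAs := ?_, hMs := ?_, hNs := ?_ }⟩
  · intro p hp
    rw [hBD] at hp
    obtain ⟨h1, h2, h3, h4, h5⟩ := iv.hP p hp
    refine ⟨Finset.mem_filter.2 ⟨h1, h3⟩, h2, ?_, h5⟩
    intro hmem
    exact not_birth_and_death L f p.2 ⟨(Finset.mem_filter.1 hmem).2, h4⟩
  · intro z hz
    rcases birth_or_death L f z hz with h | h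
    · exact Or.inl (Finset.mem_filter.2 ⟨hz, h⟩)
    · obtain ⟨s, hs⟩ := iv.hD z hz h
      exact Or.inr ⟨(s, z), by rw [hBD]; exact hs, rfl⟩
  · intro p hp q hq h
    rw [hBD] at hp hq
    exact iv.hinj2 p hp q hq (Or.inl h)
  · intro p hp q hq h
    rw [hBD] at hp hq
    exact iv.hinj2 p hp q hq (Or.inr h)
  · intro x hx
    exact cyc_self L f hf x (Finset.mem_filter.1 hx).2
  · intro x hx y hy
    obtain ⟨h1, h2, h3⟩ := cyc_supp L f hf x (Finset.mem_filter.1 hx).2 y hy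
    exact ⟨h1, h2, fun hyB => h3 (Finset.mem_filter.1 hyB).2⟩
  · -- hAs
    intro p hp
    rw [hBD] at hp
    have hd : givesDeath L f p.2 := (iv.hP p hp).2.2.2.1
    obtain ⟨hsP, hsA, hAb, _, _⟩ := hall' p.2 hd
    have hps : (sfn p.2, p.2) = p := iv.hinj2 _ hsP p hp (Or.inr rfl)
    have hfst : sfn p.2 = p.1 := congrArg Prod.fst hps
    refine ⟨fun x hx => Finset.mem_filter.2 ⟨(hAb x hx).1.1, (hAb x hx).1⟩, ?_, ?_⟩
    · rw [← hfst]
      exact hsA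
    · intro x hx
      rw [← hfst]
      exact (hAb x hx).2
  · -- hMs
    intro p hp
    rw [hBD] at hp
    have hd : givesDeath L f p.2 := (iv.hP p hp).2.2.2.1
    obtain ⟨hM1, hM2⟩ := hMall' p.2 hd
    constructor
    · intro t ht
      obtain ⟨htd, htlt⟩ := hM1 t ht
      obtain ⟨s', hs'⟩ := iv.hD t htd.1 htd
      exact ⟨(s', t), by rw [hBD]; exact hs', rfl, htlt⟩
    · obtain ⟨_, _, _, _, hce⟩ := hall' p.2 hd
      have : col L p.2 = bdOp L (cfn p.2) + ∑ x ∈ Afn p.2, canCycle L f x := by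
        rw [hce, add_assoc, fun2add, add_zero]
      rw [this, hM2, add_comm]
  · -- hNs
    intro x hx
    have hb : givesBirth L f x := (Finset.mem_filter.1 hx).2
    obtain ⟨hN1, hN2⟩ := hNall' x hb
    constructor
    · intro t ht
      obtain ⟨htd, htlt⟩ := hN1 t ht
      obtain ⟨s', hs'⟩ := iv.hD t htd.1 htd
      exact ⟨(s', t), by rw [hBD]; exact hs', rfl, htlt⟩
    · exact hN2

end Base

end SP
/-- The bijection `Α` ordering the birth-death pairs by
strictly decreasing filter value of their birth-giving cells is a shallow
order of `f`. -/
theorem alpha_is_shallow_order (L : LC C) (f : C → ℝ) (hf : IsFilter L f)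
    (A : Fin (BD L f).card → C × C)
    (hinj : Function.Injective A) (hmem : ∀ i, A i ∈ BD L f)
    (hord : ∀ i j : Fin (BD L f).card, i < j → f (A j).1 < f (A i).1) :
    IsShallowOrder L f A := by
  exact SP.main_glue L f (SP.base_cert L f hf) A hinj hmem hord
end

section
/- Let f : X → ℝ be a filter on a Lefschetz complex with n = |BD(f)| birth-death pairs, and let Ω : {1,…,n} → BD(f) be the bijection that orders the birth-death pairs by strictly increasing filter value of their death-giving cells. Then Ω is a shallow order of f. -/
attribute [local instance] Classical.propDecidable

variable {C : Type} [Fintype C] [DecidableEq C]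

section OmegaAux
set_option linter.unusedSectionVars false

variable {C : Type} [Fintype C] [DecidableEq C]

private lemma zmod2_eq_one {a : ZMod 2} (h : a ≠ 0) : a = 1 := by
  revert h; revert a; decide

private lemma zmod2_ite_eq (a : ZMod 2) : (if a ≠ 0 then (1 : ZMod 2) else 0) = a := by
  revert a; decide

private lemma pi_add_self (v : C → ZMod 2) : v + v = 0 :=
  funext fun z => zmod2_add_self (v z)

lemma bdOp_apply' (L : LC C) (c : C → ZMod 2) (x : C) :
    bdOp L c x = ∑ y, L.bd x y * c y := rfl

lemma bdOp_single (L : LC C) (y : C) : bdOp L (Pi.single y 1) = col L y := by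
  funext x
  rw [bdOp_apply']
  rw [Finset.sum_eq_single y]
  · simp [col]
  · intro b _ hb
    simp [Pi.single_apply, hb.symm]
  · simp

lemma bdOp_bdOp (L : LC C) (c : C → ZMod 2) : bdOp L (bdOp L c) = 0 := by
  funext x
  show (∑ y, L.bd x y * ∑ z, L.bd y z * c z) = 0
  simp_rw [Finset.mul_sum, ← mul_assoc]
  rw [Finset.sum_comm]
  simp_rw [← Finset.sum_mul]
  simp [L.bd_sq]

lemma bdOp_mem (L : LC C) (c : C → ZMod 2) (x : C) (h : bdOp L c x ≠ 0) : x ∈ L.cells := by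
  by_contra hx
  apply h
  rw [bdOp_apply']
  refine Finset.sum_eq_zero fun y _ => ?_
  by_cases hb : L.bd x y = 0
  · rw [hb, zero_mul]
  · exact absurd (L.bd_mem x y hb).1 hx

lemma bdOp_lt (L : LC C) (f : C → ℝ) (hf : IsFilter L f) (c : C → ZMod 2) (B : ℝ)
    (hc : ∀ z, c z ≠ 0 → f z ≤ B) (x : C) (h : bdOp L c x ≠ 0) : f x < B := by
  rw [bdOp_apply'] at h
  obtain ⟨y, _, hy⟩ := Finset.exists_ne_zero_of_sum_ne_zero h
  have h1 : L.bd x y ≠ 0 := fun h0 => hy (by rw [h0, zero_mul])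
  have h2 : c y ≠ 0 := fun h0 => hy (by rw [h0, mul_zero])
  exact lt_of_lt_of_le (hf.2 x y h1) (hc y h2)

lemma bdOp_eq_sum (L : LC C) (c : C → ZMod 2) : bdOp L c = ∑ z, c z • col L z := by
  funext x
  rw [Finset.sum_apply, bdOp_apply']
  refine Finset.sum_congr rfl fun y _ => ?_
  simp [col, mul_comm]

lemma sum_single_apply (A : Finset C) (z : C) :
    (∑ x ∈ A, Pi.single x (1 : ZMod 2)) z = if z ∈ A then 1 else 0 := by
  rw [Finset.sum_apply]
  simp_rw [Pi.single_apply]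
  rw [Finset.sum_ite_eq A z (fun _ => (1 : ZMod 2))]

lemma sum_symmdiff_zmod2 {β : Type*} [AddCommGroup β] (hchar : ∀ b : β, b + b = 0)
    (g : C → β) (A B : Finset C) :
    ∑ x ∈ (A \ B ∪ B \ A), g x = (∑ x ∈ A, g x) + (∑ x ∈ B, g x) := by
  have hdisj : Disjoint (A \ B) (B \ A) := by
    rw [Finset.disjoint_left]
    intro a ha hb
    exact (Finset.mem_sdiff.mp hb).2 (Finset.mem_sdiff.mp ha).1
  rw [Finset.sum_union hdisj]
  have h1 : ∑ x ∈ A ∩ B, g x + ∑ x ∈ A \ B, g x = ∑ x ∈ A, g x :=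
    Finset.sum_inter_add_sum_sdiff A B g
  have h2 : ∑ x ∈ B ∩ A, g x + ∑ x ∈ B \ A, g x = ∑ x ∈ B, g x :=
    Finset.sum_inter_add_sum_sdiff B A g
  rw [← h1, ← h2, Finset.inter_comm B A]
  abel_nf
  rw [two_smul, hchar, add_zero]

lemma symmdiff_eq_empty {A B : Finset C} (h : A \ B ∪ B \ A = ∅) : A = B := by
  rw [Finset.union_eq_empty] at h
  exact le_antisymm (Finset.sdiff_eq_empty_iff_subset.mp h.1)
    (Finset.sdiff_eq_empty_iff_subset.mp h.2)

lemma birth_or_death (L : LC C) (f : C → ℝ) {y : C} (hy : y ∈ L.cells) :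
    givesBirth L f y ∨ givesDeath L f y := by
  by_cases h : IsBdryBelow L f (f y) (col L y)
  · exact Or.inl ⟨hy, h⟩
  · exact Or.inr ⟨hy, h⟩

lemma not_birth_death (L : LC C) (f : C → ℝ) {y : C}
    (hb : givesBirth L f y) (hd : givesDeath L f y) : False := hd.2 hb.2



/-- `v` is a sum of boundary columns of death-giving cells with value `< b`. -/
def DSpan (L : LC C) (f : C → ℝ) (b : ℝ) (v : C → ZMod 2) : Prop :=
  ∃ g : C → ZMod 2, (∀ z, g z ≠ 0 → givesDeath L f z ∧ f z < b) ∧ bdOp L g = v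

lemma DSpan_zero (L : LC C) (f : C → ℝ) (b : ℝ) : DSpan L f b 0 :=
  ⟨0, fun z hz => absurd rfl hz, map_zero _⟩

lemma DSpan_add (L : LC C) (f : C → ℝ) (b : ℝ) {v w : C → ZMod 2}
    (hv : DSpan L f b v) (hw : DSpan L f b w) : DSpan L f b (v + w) := by
  obtain ⟨g, hg, hgv⟩ := hv
  obtain ⟨g', hg', hgw⟩ := hw
  refine ⟨g + g', fun z hz => ?_, by rw [map_add, hgv, hgw]⟩
  by_cases h : g z = 0
  · exact hg' z (fun h' => hz (by show g z + g' z = 0; rw [h, h', add_zero]))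
  · exact hg z h

lemma DSpan_sum (L : LC C) (f : C → ℝ) (b : ℝ) {ι : Type*} (s : Finset ι)
    (h : ι → (C → ZMod 2)) (hh : ∀ i ∈ s, DSpan L f b (h i)) :
    DSpan L f b (∑ i ∈ s, h i) :=
  Finset.sum_induction h (DSpan L f b) (fun _ _ => DSpan_add L f b) (DSpan_zero L f b) hh

lemma DSpan_mono (L : LC C) (f : C → ℝ) {b b' : ℝ} (hb : b ≤ b') {v : C → ZMod 2}
    (hv : DSpan L f b v) : DSpan L f b' v := by
  obtain ⟨g, hg, hgv⟩ := hv
  exact ⟨g, fun z hz => ⟨(hg z hz).1, lt_of_lt_of_le (hg z hz).2 hb⟩, hgv⟩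

lemma isBdryBelow_dspan (L : LC C) (f : C → ℝ) (hf : IsFilter L f) :
    ∀ (n : ℕ) (b : ℝ) (v : C → ZMod 2),
      (L.cells.filter (fun z => f z < b)).card ≤ n →
      IsBdryBelow L f b v → DSpan L f b v := by
  intro n
  induction n with
  | zero =>
    rintro b v hcard ⟨c, hc, hcv⟩
    have hc0 : c = 0 := by
      funext z
      by_contra h
      have hz := hc z h
      have hmem : z ∈ L.cells.filter (fun z => f z < b) :=
        Finset.mem_filter.mpr ⟨hz.1, hz.2⟩
      have := Finset.card_pos.mpr ⟨z, hmem⟩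
      omega
    rw [← hcv, hc0, map_zero]
    exact DSpan_zero L f b
  | succ n ih =>
    rintro b v hcard ⟨c, hc, hcv⟩
    rw [← hcv, bdOp_eq_sum]
    apply DSpan_sum
    intro z _
    by_cases hz : c z = 0
    · rw [hz, zero_smul]; exact DSpan_zero L f b
    · rw [zmod2_eq_one hz, one_smul]
      obtain ⟨hzc, hzb⟩ := hc z hz
      rcases birth_or_death L f hzc with hb | hd
      · have hsub : L.cells.filter (fun w => f w < f z) ⊂ L.cells.filter (fun w => f w < b) := by
          constructor
          · intro w hw
            rw [Finset.mem_filter] at hw ⊢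
            exact ⟨hw.1, lt_trans hw.2 hzb⟩
          · intro hss
            have := Finset.mem_filter.mp (hss (Finset.mem_filter.mpr ⟨hzc, hzb⟩))
            exact lt_irrefl _ this.2
        have hcard' : (L.cells.filter (fun w => f w < f z)).card ≤ n := by
          have := Finset.card_lt_card hsub
          omega
        exact DSpan_mono L f (le_of_lt hzb) (ih (f z) (col L z) hcard' hb.2)
      · refine ⟨Pi.single z 1, fun w hw => ?_, bdOp_single L z⟩
        have hwz : w = z := by
          by_contra hne
          exact hw (Pi.single_eq_of_ne hne 1)
        subst hwz
        exact ⟨hd, hzb⟩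

lemma col_isBdryBelow_of_dspan (L : LC C) (f : C → ℝ) (hf : IsFilter L f) (b : ℝ)
    {v : C → ZMod 2} (hv : DSpan L f b v) : IsBdryBelow L f b v := by
  obtain ⟨g, hg, hgv⟩ := hv
  exact ⟨g, fun z hz => ⟨(hg z hz).1.1, (hg z hz).2⟩, hgv⟩

/-- Boundary columns of death-giving cells are linearly independent mod 2. -/
lemma death_indep (L : LC C) (f : C → ℝ) (hf : IsFilter L f) (g : C → ZMod 2)
    (hg : ∀ z, g z ≠ 0 → givesDeath L f z) (h0 : bdOp L g = 0) : g = 0 := by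
  by_contra hne
  obtain ⟨z0, hz0⟩ := Function.ne_iff.mp hne
  have hsupp : (Finset.univ.filter (fun z => g z ≠ 0)).Nonempty :=
    ⟨z0, Finset.mem_filter.mpr ⟨Finset.mem_univ _, hz0⟩⟩
  obtain ⟨z, hzmem, hzmax⟩ := Finset.exists_max_image _ f hsupp
  have hgz : g z ≠ 0 := (Finset.mem_filter.mp hzmem).2
  have hdz := hg z hgz
  have hcol : bdOp L (g + Pi.single z 1) = col L z := by
    rw [map_add, bdOp_single, h0, zero_add]
  apply hdz.2
  refine ⟨g + Pi.single z 1, fun w hw => ?_, hcol⟩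
  have hwz : w ≠ z := by
    rintro rfl
    apply hw
    rw [Pi.add_apply, Pi.single_eq_same, zmod2_eq_one hgz]
    decide
  have hgw : g w ≠ 0 := by
    intro h
    apply hw
    rw [Pi.add_apply, h, Pi.single_eq_of_ne hwz, add_zero]
  have hwcell : w ∈ L.cells := (hg w hgw).1
  have hle : f w ≤ f z := hzmax w (Finset.mem_filter.mpr ⟨Finset.mem_univ _, hgw⟩)
  refine ⟨hwcell, lt_of_le_of_ne hle fun h => hwz (hf.1 w hwcell z hdz.1 h)⟩

set_option maxHeartbeats 1000000 in
lemma canChain_spec (L : LC C) (f : C → ℝ) (hf : IsFilter L f) {y : C}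
    (hy : givesBirth L f y) :
    bdOp L (canChain L f y) = col L y ∧
      ∀ z, canChain L f y z ≠ 0 → f z < f y ∧ givesDeath L f z := by
  obtain ⟨g, hg, hgv⟩ :=
    isBdryBelow_dspan L f hf _ (f y) (col L y) le_rfl hy.2
  have hex : ∃ c : C → ZMod 2,
      (∀ z, c z ≠ 0 → f z < f y ∧ givesDeath L f z) ∧ bdOp L c = col L y :=
    ⟨g, fun z hz => ⟨(hg z hz).2, (hg z hz).1⟩, hgv⟩
  have hch : canChain L f y = hex.choose := by
    rw [canChain, dif_pos hex]
  rw [hch]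
  exact ⟨hex.choose_spec.2, hex.choose_spec.1⟩

lemma canCycle_bd (L : LC C) (f : C → ℝ) (hf : IsFilter L f) {y : C}
    (hy : givesBirth L f y) : bdOp L (canCycle L f y) = 0 := by
  rw [canCycle, map_add, bdOp_single, (canChain_spec L f hf hy).1]
  exact pi_add_self _

lemma canCycle_self (L : LC C) (f : C → ℝ) (hf : IsFilter L f) {y : C}
    (hy : givesBirth L f y) : canCycle L f y y = 1 := by
  rw [canCycle]
  rw [Pi.add_apply, Pi.single_eq_same]
  have : canChain L f y y = 0 := by
    by_contra h
    exact lt_irrefl _ ((canChain_spec L f hf hy).2 y h).1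
  rw [this, add_zero]

lemma canCycle_supp (L : LC C) (f : C → ℝ) (hf : IsFilter L f) {y : C}
    (hy : givesBirth L f y) {z : C} (hz : canCycle L f y z ≠ 0) :
    z = y ∨ (f z < f y ∧ givesDeath L f z) := by
  by_cases hzy : z = y
  · exact Or.inl hzy
  · right
    have : canCycle L f y z = canChain L f y z := by
      rw [canCycle, Pi.add_apply, Pi.single_eq_of_ne hzy, zero_add]
    rw [this] at hz
    exact (canChain_spec L f hf hy).2 z hz

lemma sortAux_spec (L : LC C) (f : C → ℝ) (hf : IsFilter L f) :
    ∀ (n : ℕ) (S : Finset C), S.card = n → S ⊆ L.cells →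
      (sortAux f n S).toFinset = S ∧
        List.Pairwise (fun a b => f a < f b) (sortAux f n S) := by
  intro n
  induction n with
  | zero =>
    intro S h0 _
    rw [Finset.card_eq_zero] at h0
    subst h0
    simp [sortAux]
  | succ n ih =>
    intro S hS hSc
    have hne : S.Nonempty := by rw [← Finset.card_pos, hS]; omega
    obtain ⟨hm1, hm2⟩ := (Finset.exists_min_image S f hne).choose_spec
    set m := (Finset.exists_min_image S f hne).choose with hmdef
    have herase : (S.erase m).card = n := by
      rw [Finset.card_erase_of_mem hm1, hS]
      omega
    obtain ⟨ih1, ih2⟩ := ih (S.erase m) herase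
      (fun x hx => hSc (Finset.mem_of_mem_erase hx))
    have hunfold : sortAux f (n+1) S = m :: sortAux f n (S.erase m) := by
      simp only [sortAux, dif_pos hne]; rfl
    rw [hunfold]
    constructor
    · rw [List.toFinset_cons, ih1, Finset.insert_erase hm1]
    · rw [List.pairwise_cons]
      refine ⟨fun a ha => ?_, ih2⟩
      have haS : a ∈ S.erase m := by rw [← ih1]; exact List.mem_toFinset.mpr ha
      have hne' : a ≠ m := (Finset.mem_erase.mp haS).1
      have hle := hm2 a (Finset.mem_of_mem_erase haS)
      rcases lt_or_eq_of_le hle with h | h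
      · exact h
      · exact absurd (hf.1 m (hSc hm1) a (hSc (Finset.mem_of_mem_erase haS)) h)
          (Ne.symm hne')

lemma sortedCells_spec (L : LC C) (f : C → ℝ) (hf : IsFilter L f) :
    (sortedCells L f).toFinset = L.cells ∧
      List.Pairwise (fun a b => f a < f b) (sortedCells L f) :=
  sortAux_spec L f hf L.cells.card L.cells rfl (subset_refl _)

lemma prefix_facts (L : LC C) (f : C → ℝ) (hf : IsFilter L f) {done rest : List C} {y : C}
    (hdec : sortedCells L f = done ++ y :: rest) :
    y ∈ L.cells ∧ y ∉ done.toFinset ∧ done.toFinset ⊆ L.cells ∧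
      (∀ z ∈ L.cells, (f z < f y ↔ z ∈ done.toFinset)) := by
  obtain ⟨htf, hpw⟩ := sortedCells_spec L f hf
  rw [hdec] at htf hpw
  rw [List.pairwise_append] at hpw
  obtain ⟨hpw1, hpw2, hcross⟩ := hpw
  have hyc : y ∈ L.cells := by
    rw [← htf]
    simp
  have hdc : done.toFinset ⊆ L.cells := by
    rw [← htf]
    intro z hz
    rw [List.mem_toFinset] at hz
    simp [hz]
  have hlt : ∀ z ∈ done.toFinset, f z < f y := fun z hz =>
    hcross z (List.mem_toFinset.mp hz) y List.mem_cons_self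
  have hnd : y ∉ done.toFinset := fun h => lt_irrefl _ (hlt y h)
  refine ⟨hyc, hnd, hdc, fun z hzc => ⟨fun hfz => ?_, fun h => hlt z h⟩⟩
  rw [← htf] at hzc
  rw [List.mem_toFinset, List.mem_append, List.mem_cons] at hzc
  rcases hzc with hzd | rfl | hzr
  · exact List.mem_toFinset.mpr hzd
  · exact absurd hfz (lt_irrefl _)
  · exact absurd (lt_trans hfz ((List.pairwise_cons.mp hpw2).1 z hzr)) (lt_irrefl _)

lemma cancelList_append (L : LC C) (l1 l2 : List (C × C)) :
    cancelList L (l1 ++ l2) = cancelList (cancelList L l1) l2 := by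
  induction l1 generalizing L with
  | nil => rfl
  | cons p ps ih => rw [List.cons_append, cancelList, cancelList, ih]

lemma cancel_cells (L : LC C) {s t : C} (h : L.bd s t = 1) :
    (cancel L s t).cells = L.cells \ {s, t} := by
  rw [cancel, dif_pos h]

lemma cancel_bd (L : LC C) {s t : C} (h : L.bd s t = 1) :
    (cancel L s t).bd = cancelBd L s t := by
  rw [cancel, dif_pos h]

/-- Cells removed by canceling the pairs of `π`. -/
def removedOf (π : List (C × C)) : Finset C :=
  (π.map Prod.fst).toFinset ∪ (π.map Prod.snd).toFinset

/-- The big invariant carried through the persistence-pairing algorithm. -/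
structure PInv (L : LC C) (f : C → ℝ) (P : Finset C) (st : Finset C × Finset (C × C))
    (π : List (C × C)) : Prop where
  pairs_eq : st.2 = π.toFinset
  st1_eq : st.1 = (P.filter (fun z => givesBirth L f z)) \ (π.map Prod.fst).toFinset
  snds_mem : ∀ p ∈ π, p.2 ∈ P ∧ givesDeath L f p.2
  fsts_mem : ∀ p ∈ π, p.1 ∈ P ∧ givesBirth L f p.1 ∧ f p.1 < f p.2
  snds_all : ∀ z ∈ P, givesDeath L f z → z ∈ π.map Prod.snd
  sorted_snds : π.Pairwise (fun p q => f p.2 < f q.2)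
  ind : ∀ A ⊆ st.1, (∃ c : C → ZMod 2, (∀ z, c z ≠ 0 → z ∈ P) ∧
          bdOp L c = ∑ x ∈ A, canCycle L f x) → A = ∅
  span : ∀ v : C → ZMod 2, (∀ z, v z ≠ 0 → z ∈ P) → bdOp L v = 0 →
          ∃ A, A ⊆ st.1 ∧ ∃ c : C → ZMod 2, (∀ z, c z ≠ 0 → z ∈ P) ∧
            bdOp L c = v + ∑ x ∈ A, canCycle L f x
  qcells : (cancelList L π).cells = L.cells \ removedOf π
  qfilt : ∀ x y, (cancelList L π).bd x y ≠ 0 → f x < f y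
  colzero : ∀ y ∈ (cancelList L π).cells, y ∈ P → ∀ x, (cancelList L π).bd x y = 0
  rep : ∀ y ∈ (cancelList L π).cells, ∃ e : C → ZMod 2, e y = 1 ∧
          (∀ z, e z ≠ 0 → z = y ∨ (z ∈ π.map Prod.snd ∧ f z < f y)) ∧
          (∀ x ∈ π.map Prod.fst, bdOp L e x = 0) ∧
          (∀ x ∈ (cancelList L π).cells, (cancelList L π).bd x y = bdOp L e x)
  shallow : ∀ (k : ℕ) (hk : k < π.length),
      IsShallow (cancelList L (π.take k)) f (π.get ⟨k, hk⟩).1 (π.get ⟨k, hk⟩).2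

lemma pinv_nil (L : LC C) (f : C → ℝ) (hf : IsFilter L f) :
    PInv L f ∅ (∅, ∅) [] where
  pairs_eq := by simp
  st1_eq := by simp
  snds_mem := by simp
  fsts_mem := by simp
  snds_all := by simp
  sorted_snds := List.Pairwise.nil
  ind := fun A hA _ => Finset.subset_empty.mp hA
  span := by
    intro v hv _
    have hv0 : v = 0 := funext fun z => by
      by_contra h
      exact absurd (hv z h) (Finset.notMem_empty z)
    exact ⟨∅, Finset.empty_subset _, 0, fun z hz => absurd rfl hz, by simp [hv0]⟩
  qcells := by simp [cancelList, removedOf]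
  qfilt := fun x y h => hf.2 x y (by simpa [cancelList] using h)
  colzero := fun y _ hy => absurd hy (Finset.notMem_empty y)
  rep := by
    intro y _
    refine ⟨Pi.single y 1, Pi.single_eq_same y 1, ?_, by simp, ?_⟩
    · intro z hz
      left
      by_contra h
      exact hz (Pi.single_eq_of_ne h 1)
    · intro x _
      rw [bdOp_single]
      rfl
  shallow := fun k hk => absurd hk (by simp)

lemma key_lemma (L : LC C) (f : C → ℝ) (hf : IsFilter L f)
    {P : Finset C} {st : Finset C × Finset (C × C)} {π : List (C × C)}
    (inv : PInv L f P st π) (hPc : P ⊆ L.cells) {y : C} (hy : y ∈ L.cells) (hyP : y ∉ P)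
    (hbelow : ∀ z ∈ L.cells, (f z < f y ↔ z ∈ P))
    {e : C → ZMod 2} (he1 : e y = 1)
    (he2 : ∀ z, e z ≠ 0 → z = y ∨ (z ∈ π.map Prod.snd ∧ f z < f y))
    (he3 : ∀ x ∈ π.map Prod.fst, bdOp L e x = 0)
    (he4 : ∀ x ∈ (cancelList L π).cells, (cancelList L π).bd x y = bdOp L e x) :
    ((cancelList L π).cells.filter (fun x => (cancelList L π).bd x y ≠ 0)) ⊆ st.1 ∧
    (∀ x ∈ (cancelList L π).cells.filter (fun x => (cancelList L π).bd x y ≠ 0),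
        f x < f y ∧ givesBirth L f x) ∧
    ∃ c : C → ZMod 2, (∀ z, c z ≠ 0 → z ∈ P) ∧
      bdOp L c = (∑ x ∈ (cancelList L π).cells.filter
          (fun x => (cancelList L π).bd x y ≠ 0), canCycle L f x) + col L y := by
  set Q := cancelList L π with hQdef
  set u := bdOp L e with hu
  set A := Q.cells.filter (fun x => Q.bd x y ≠ 0) with hA
  have hsnd : ∀ z ∈ π.map Prod.snd, z ∈ P ∧ givesDeath L f z := by
    intro z hz
    obtain ⟨p, hp, rfl⟩ := List.mem_map.mp hz
    exact inv.snds_mem p hp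
  have hesupp : ∀ z, e z ≠ 0 → f z ≤ f y := by
    intro z hz
    rcases he2 z hz with rfl | ⟨_, hlt⟩
    · exact le_refl _
    · exact le_of_lt hlt
  have hu_lt : ∀ x, u x ≠ 0 → f x < f y := fun x hx => bdOp_lt L f hf e (f y) hesupp x hx
  have hu_cells : ∀ x, u x ≠ 0 → x ∈ L.cells := fun x hx => bdOp_mem L e x hx
  have hu_P : ∀ x, u x ≠ 0 → x ∈ P := fun x hx =>
    (hbelow x (hu_cells x hx)).mp (hu_lt x hx)
  have hAmem : ∀ x, x ∈ A ↔ (x ∈ Q.cells ∧ u x ≠ 0) := by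
    intro x
    rw [hA, Finset.mem_filter]
    constructor
    · rintro ⟨h1, h2⟩; exact ⟨h1, by rwa [← he4 x h1]⟩
    · rintro ⟨h1, h2⟩; exact ⟨h1, by rwa [he4 x h1]⟩
  have hAsub : A ⊆ st.1 := by
    intro x hx
    rw [hAmem] at hx
    obtain ⟨hxQ, hxu⟩ := hx
    have hxP := hu_P x hxu
    have hxc := hu_cells x hxu
    have hbirth : givesBirth L f x := by
      rcases birth_or_death L f hxc with hb | hd
      · exact hb
      · exfalso
        have hxs := inv.snds_all x hxP hd
        have hrem : x ∈ removedOf π := Finset.mem_union_right _ (List.mem_toFinset.mpr hxs)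
        rw [inv.qcells] at hxQ
        exact (Finset.mem_sdiff.mp hxQ).2 hrem
    have hxnf : x ∉ (π.map Prod.fst).toFinset := by
      intro hxf
      have hrem : x ∈ removedOf π := Finset.mem_union_left _ hxf
      rw [inv.qcells] at hxQ
      exact (Finset.mem_sdiff.mp hxQ).2 hrem
    rw [inv.st1_eq]
    exact Finset.mem_sdiff.mpr ⟨Finset.mem_filter.mpr ⟨hxP, hbirth⟩, hxnf⟩
  have hAfacts : ∀ x ∈ A, f x < f y ∧ givesBirth L f x := by
    intro x hx
    have hx' := (hAmem x).mp hx
    refine ⟨hu_lt x hx'.2, ?_⟩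
    have hx2 := hAsub hx
    rw [inv.st1_eq] at hx2
    exact (Finset.mem_filter.mp (Finset.mem_sdiff.mp hx2).1).2
  refine ⟨hAsub, hAfacts, ?_⟩
  set cs : C → ZMod 2 := ∑ x ∈ A, canChain L f x with hcs
  set indA : C → ZMod 2 := ∑ x ∈ A, Pi.single x 1 with hindA
  set e₀ : C → ZMod 2 := e + Pi.single y 1 with he₀
  have claim1 : (∑ x ∈ A, canCycle L f x) = indA + cs := by
    rw [hindA, hcs, ← Finset.sum_add_distrib]
    rfl
  set χ : C → ZMod 2 := indA + u + cs with hχ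
  have claim2 : bdOp L e₀ = u + col L y := by rw [he₀, map_add, bdOp_single, hu]
  have identity : χ + bdOp L e₀ = (∑ x ∈ A, canCycle L f x) + col L y := by
    rw [claim1, claim2, hχ]
    have hab : indA + u + cs + (u + col L y) = (indA + cs + col L y) + (u + u) := by abel
    rw [hab, pi_add_self, add_zero]
  have hcs_supp : ∀ z, cs z ≠ 0 → givesDeath L f z ∧ f z < f y := by
    intro z hz
    rw [hcs, Finset.sum_apply] at hz
    obtain ⟨x, hxA, hxz⟩ := Finset.exists_ne_zero_of_sum_ne_zero hz
    have hxb := (hAfacts x hxA).2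
    have hspec := (canChain_spec L f hf hxb).2 z hxz
    exact ⟨hspec.2, lt_trans hspec.1 (hAfacts x hxA).1⟩
  have hχsupp : ∀ z, χ z ≠ 0 → givesDeath L f z := by
    intro z hz
    have hz' : indA z + u z + cs z ≠ 0 := hz
    by_cases hzQ : z ∈ Q.cells
    · exfalso
      have h1 : indA z = u z := by
        rw [hindA, sum_single_apply]
        by_cases hzA : z ∈ A
        · rw [if_pos hzA]
          exact (zmod2_eq_one ((hAmem z).mp hzA).2).symm
        · rw [if_neg hzA]
          by_contra hne
          exact hzA ((hAmem z).mpr ⟨hzQ, fun h0 => hne h0.symm⟩)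
      have h2 : cs z = 0 := by
        by_contra hcsz
        obtain ⟨hdz, hltz⟩ := hcs_supp z hcsz
        have hzP : z ∈ P := (hbelow z hdz.1).mp hltz
        have hzs := inv.snds_all z hzP hdz
        have hrem : z ∈ removedOf π := Finset.mem_union_right _ (List.mem_toFinset.mpr hzs)
        rw [inv.qcells] at hzQ
        exact (Finset.mem_sdiff.mp hzQ).2 hrem
      apply hz'
      rw [h1, h2, add_zero]
      exact zmod2_add_self _
    · have hindz : indA z = 0 := by
        rw [hindA, sum_single_apply, if_neg (fun h => hzQ (Finset.mem_filter.mp h).1)]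
      by_cases hcsz : cs z = 0
      · have huz : u z ≠ 0 := by
          intro h
          apply hz'
          rw [hindz, h, hcsz, add_zero, add_zero]
        have hzc := hu_cells z huz
        have hzrem : z ∈ removedOf π := by
          by_contra h
          exact hzQ (inv.qcells ▸ Finset.mem_sdiff.mpr ⟨hzc, h⟩)
        rcases Finset.mem_union.mp hzrem with hl | hr
        · exact absurd (he3 z (List.mem_toFinset.mp hl)) huz
        · exact (hsnd z (List.mem_toFinset.mp hr)).2
      · exact (hcs_supp z hcsz).1
  have hχcycle : bdOp L χ = 0 := by
    have hχeq : χ = ((∑ x ∈ A, canCycle L f x) + col L y) + bdOp L e₀ := by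
      rw [← identity, add_assoc, pi_add_self, add_zero]
    rw [hχeq, map_add, map_add]
    have h1 : bdOp L (∑ x ∈ A, canCycle L f x) = 0 := by
      rw [map_sum]
      exact Finset.sum_eq_zero fun x hx => canCycle_bd L f hf (hAfacts x hx).2
    have h2 : bdOp L (col L y) = 0 := by
      rw [← bdOp_single, bdOp_bdOp]
    rw [h1, h2, bdOp_bdOp, add_zero, add_zero]
  have hχ0 : χ = 0 := death_indep L f hf χ hχsupp hχcycle
  refine ⟨e₀, ?_, ?_⟩
  · intro z hz
    have hzy : z ≠ y := by
      rintro rfl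
      apply hz
      rw [he₀, Pi.add_apply, he1, Pi.single_eq_same]
      decide
    have hez : e z ≠ 0 := by
      intro h
      apply hz
      rw [he₀, Pi.add_apply, h, Pi.single_eq_of_ne hzy, add_zero]
    rcases he2 z hez with rfl | ⟨hzs, _⟩
    · exact absurd rfl hzy
    · exact (hsnd z hzs).1
  · rw [← identity, hχ0, zero_add]

lemma step_birth (L : LC C) (f : C → ℝ) (hf : IsFilter L f)
    {P : Finset C} {st : Finset C × Finset (C × C)} {π : List (C × C)}
    (inv : PInv L f P st π) (hPc : P ⊆ L.cells) {y : C} (hy : y ∈ L.cells) (hyP : y ∉ P)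
    (hbelow : ∀ z ∈ L.cells, (f z < f y ↔ z ∈ P)) (hb : givesBirth L f y) :
    PInv L f (insert y P) (pairStep L f st y) π := by
  have hps : pairStep L f st y = (insert y st.1, st.2) := by
    rw [pairStep, if_pos hb]
  rw [hps]
  set Q := cancelList L π with hQdef
  have hst1P : st.1 ⊆ P := by
    rw [inv.st1_eq]
    intro x hx
    exact (Finset.mem_filter.mp (Finset.mem_sdiff.mp hx).1).1
  have hrem : removedOf π ⊆ P := by
    intro z hz
    rcases Finset.mem_union.mp hz with h | h
    · obtain ⟨p, hp, rfl⟩ := List.mem_map.mp (List.mem_toFinset.mp h)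
      exact (inv.fsts_mem p hp).1
    · obtain ⟨p, hp, rfl⟩ := List.mem_map.mp (List.mem_toFinset.mp h)
      exact (inv.snds_mem p hp).1
  have hyQ : y ∈ Q.cells := by
    rw [inv.qcells]
    exact Finset.mem_sdiff.mpr ⟨hy, fun h => hyP (hrem h)⟩
  obtain ⟨e, he1, he2, he3, he4⟩ := inv.rep y hyQ
  obtain ⟨hAsub, hAfacts, c, hc, hceq⟩ :=
    key_lemma L f hf inv hPc hy hyP hbelow he1 he2 he3 he4
  have hA0 : Q.cells.filter (fun x => Q.bd x y ≠ 0) = ∅ := by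
    apply inv.ind _ hAsub
    refine ⟨c + canChain L f y, ?_, ?_⟩
    · intro z hz
      by_cases h1 : c z = 0
      · have h2 : canChain L f y z ≠ 0 := fun h => hz (by rw [Pi.add_apply, h1, h, add_zero])
        have hs := (canChain_spec L f hf hb).2 z h2
        exact (hbelow z hs.2.1).mp hs.1
      · exact hc z h1
    · rw [map_add, hceq, (canChain_spec L f hf hb).1, add_assoc, pi_add_self, add_zero]
  have hcolzero_y : ∀ x, Q.bd x y = 0 := by
    intro x
    by_cases hxQ : x ∈ Q.cells
    · by_contra h
      have hmem : x ∈ Q.cells.filter (fun x => Q.bd x y ≠ 0) := Finset.mem_filter.mpr ⟨hxQ, h⟩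
      rw [hA0] at hmem
      exact Finset.notMem_empty x hmem
    · by_contra h
      exact hxQ (Q.bd_mem x y h).1
  refine { pairs_eq := inv.pairs_eq, sorted_snds := inv.sorted_snds,
           qcells := inv.qcells, qfilt := inv.qfilt, rep := inv.rep,
           shallow := inv.shallow,
           st1_eq := ?_, snds_mem := ?_, fsts_mem := ?_, snds_all := ?_,
           ind := ?_, span := ?_, colzero := ?_ }
  · -- st1_eq
    ext x
    simp only [inv.st1_eq, Finset.mem_insert, Finset.mem_sdiff, Finset.mem_filter]
    constructor
    · rintro (rfl | ⟨⟨h1, h2⟩, h3⟩)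
      · exact ⟨⟨Or.inl rfl, hb⟩, fun hc' => hyP (hrem (Finset.mem_union_left _ hc'))⟩
      · exact ⟨⟨Or.inr h1, h2⟩, h3⟩
    · rintro ⟨⟨rfl | h1, h2⟩, h3⟩
      · exact Or.inl rfl
      · exact Or.inr ⟨⟨h1, h2⟩, h3⟩
  · exact fun p hp => ⟨Finset.mem_insert_of_mem (inv.snds_mem p hp).1, (inv.snds_mem p hp).2⟩
  · exact fun p hp => ⟨Finset.mem_insert_of_mem (inv.fsts_mem p hp).1,
      (inv.fsts_mem p hp).2.1, (inv.fsts_mem p hp).2.2⟩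
  · -- snds_all
    intro z hz hd
    rcases Finset.mem_insert.mp hz with rfl | h
    · exact absurd hb (fun hb' => not_birth_death L f hb' hd)
    · exact inv.snds_all z h hd
  · -- ind
    rintro A' hA' ⟨c', hc', hceq'⟩
    have hyA' : y ∉ A' := by
      intro hyA
      have hL : (∑ x ∈ A', canCycle L f x) y = 1 := by
        rw [Finset.sum_apply]
        rw [Finset.sum_eq_single_of_mem y hyA]
        · exact canCycle_self L f hf hb
        · intro x hxA hxy
          have hx1 : x ∈ st.1 := by
            rcases Finset.mem_insert.mp (hA' hxA) with rfl | h
            · exact absurd rfl hxy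
            · exact h
          rw [inv.st1_eq] at hx1
          have hxP : x ∈ P := (Finset.mem_filter.mp (Finset.mem_sdiff.mp hx1).1).1
          have hxb : givesBirth L f x := (Finset.mem_filter.mp (Finset.mem_sdiff.mp hx1).1).2
          have hxlt : f x < f y := (hbelow x (hPc hxP)).mpr hxP
          by_contra h
          rcases canCycle_supp L f hf hxb h with rfl | ⟨hlt, _⟩
          · exact lt_irrefl _ hxlt
          · exact lt_irrefl _ (lt_trans hlt hxlt)
      have hR : bdOp L c' y = 0 := by
        rw [bdOp_apply']
        refine Finset.sum_eq_zero fun z _ => ?_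
        by_cases hbz : L.bd y z = 0
        · rw [hbz, zero_mul]
        · by_cases hcz : c' z = 0
          · rw [hcz, mul_zero]
          · exfalso
            have hzP := hc' z hcz
            have hyz := hf.2 y z hbz
            rcases Finset.mem_insert.mp hzP with rfl | h
            · exact lt_irrefl _ hyz
            · exact lt_irrefl _ (lt_trans hyz ((hbelow z (hPc h)).mpr h))
      have hcf := congrFun hceq' y
      rw [hR, hL] at hcf
      exact absurd hcf (by decide)
    have hA'sub : A' ⊆ st.1 := by
      intro x hx
      rcases Finset.mem_insert.mp (hA' hx) with rfl | h
      · exact absurd hx hyA'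
      · exact h
    by_cases hcy : c' y = 0
    · refine inv.ind A' hA'sub ⟨c', fun z hz => ?_, hceq'⟩
      rcases Finset.mem_insert.mp (hc' z hz) with rfl | h
      · exact absurd hcy hz
      · exact h
    · have hcy1 := zmod2_eq_one hcy
      have hdecomp : c' = Function.update c' y 0 + Pi.single y 1 := by
        funext z
        by_cases hzy : z = y
        · subst hzy
          rw [Pi.add_apply, Function.update_self, Pi.single_eq_same, zero_add, hcy1]
        · rw [Pi.add_apply, Function.update_of_ne hzy, Pi.single_eq_of_ne hzy, add_zero]
      refine inv.ind A' hA'sub ⟨Function.update c' y 0 + canChain L f y, fun z hz => ?_, ?_⟩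
      · by_cases h1 : Function.update c' y 0 z = 0
        · have h2 : canChain L f y z ≠ 0 := fun h => hz (by rw [Pi.add_apply, h1, h, add_zero])
          have hs := (canChain_spec L f hf hb).2 z h2
          exact (hbelow z hs.2.1).mp hs.1
        · have hzy : z ≠ y := fun h => h1 (by rw [h, Function.update_self])
          have hcz : c' z ≠ 0 := by rwa [Function.update_of_ne hzy] at h1
          rcases Finset.mem_insert.mp (hc' z hcz) with rfl | h
          · exact absurd rfl hzy
          · exact h
      · rw [map_add, (canChain_spec L f hf hb).1]
        have hup : bdOp L c' = bdOp L (Function.update c' y 0) + col L y := by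
          conv_lhs => rw [hdecomp]
          rw [map_add, bdOp_single]
        have hupd : bdOp L (Function.update c' y 0) =
            (∑ x ∈ A', canCycle L f x) + col L y := by
          rw [← hceq', hup, add_assoc, pi_add_self, add_zero]
        rw [hupd, add_assoc, pi_add_self, add_zero]
  · -- span
    intro v hv hbv
    by_cases hvy : v y = 0
    · obtain ⟨A'', hA'', c'', hc'', heq''⟩ := inv.span v (fun z hz => by
        rcases Finset.mem_insert.mp (hv z hz) with rfl | h
        · exact absurd hvy hz
        · exact h) hbv
      exact ⟨A'', Finset.Subset.trans hA'' (Finset.subset_insert _ _), c'',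
        fun z hz => Finset.mem_insert_of_mem (hc'' z hz), heq''⟩
    · have hv1 := zmod2_eq_one hvy
      set v₀ := v + canCycle L f y with hv₀
      have hv₀y : v₀ y = 0 := by
        rw [hv₀, Pi.add_apply, hv1, canCycle_self L f hf hb]
        decide
      have hv₀supp : ∀ z, v₀ z ≠ 0 → z ∈ P := by
        intro z hz
        have hzy : z ≠ y := fun h => hz (h ▸ hv₀y)
        by_cases h1 : v z = 0
        · have h2 : canCycle L f y z ≠ 0 := fun h => hz (by rw [hv₀, Pi.add_apply, h1, h, add_zero])
          rcases canCycle_supp L f hf hb h2 with rfl | ⟨hlt, hd⟩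
          · exact absurd rfl hzy
          · exact (hbelow z hd.1).mp hlt
        · rcases Finset.mem_insert.mp (hv z h1) with rfl | h
          · exact absurd rfl hzy
          · exact h
      have hv₀bd : bdOp L v₀ = 0 := by
        rw [hv₀, map_add, hbv, canCycle_bd L f hf hb, add_zero]
      obtain ⟨A'', hA'', c'', hc'', heq''⟩ := inv.span v₀ hv₀supp hv₀bd
      have hyA'' : y ∉ A'' := fun h => hyP (hst1P (hA'' h))
      refine ⟨insert y A'', Finset.insert_subset_insert y hA'', c'',
        fun z hz => Finset.mem_insert_of_mem (hc'' z hz), ?_⟩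
      rw [Finset.sum_insert hyA'', heq'', hv₀]
      abel
  · -- colzero
    intro y' hy'Q hy'P x
    rcases Finset.mem_insert.mp hy'P with rfl | h
    · exact hcolzero_y x
    · exact inv.colzero y' hy'Q h x

lemma step_death (L : LC C) (f : C → ℝ) (hf : IsFilter L f)
    {P : Finset C} {st : Finset C × Finset (C × C)} {π : List (C × C)}
    (inv : PInv L f P st π) (hPc : P ⊆ L.cells) {t : C} (ht : t ∈ L.cells) (htP : t ∉ P)
    (hbelow : ∀ z ∈ L.cells, (f z < f t ↔ z ∈ P)) (hd : givesDeath L f t) :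
    ∃ π', PInv L f (insert t P) (pairStep L f st t) π' := by
  set Q := cancelList L π with hQdef
  have hnb : ¬ givesBirth L f t := fun hb => not_birth_death L f hb hd
  have hst1P : st.1 ⊆ P := by
    rw [inv.st1_eq]
    intro x hx
    exact (Finset.mem_filter.mp (Finset.mem_sdiff.mp hx).1).1
  have hrem : removedOf π ⊆ P := by
    intro z hz
    rcases Finset.mem_union.mp hz with h | h
    · obtain ⟨p, hp, rfl⟩ := List.mem_map.mp (List.mem_toFinset.mp h)
      exact (inv.fsts_mem p hp).1
    · obtain ⟨p, hp, rfl⟩ := List.mem_map.mp (List.mem_toFinset.mp h)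
      exact (inv.snds_mem p hp).1
  have htQ : t ∈ Q.cells := by
    rw [inv.qcells]
    exact Finset.mem_sdiff.mpr ⟨ht, fun h => htP (hrem h)⟩
  obtain ⟨e, he1, he2, he3, he4⟩ := inv.rep t htQ
  obtain ⟨hAsub, hAfacts, c, hc, hceq⟩ :=
    key_lemma L f hf inv hPc ht htP hbelow he1 he2 he3 he4
  set A := Q.cells.filter (fun x => Q.bd x t ≠ 0) with hAdef
  have hAne : A.Nonempty := by
    rw [Finset.nonempty_iff_ne_empty]
    intro h0
    apply hd.2
    refine ⟨c, fun z hz => ⟨hPc (hc z hz), (hbelow z (hPc (hc z hz))).mpr (hc z hz)⟩, ?_⟩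
    rw [hceq, h0, Finset.sum_empty, zero_add]
  have hHom : HomBelow L f (f t) (∑ x ∈ A, canCycle L f x) (col L t) :=
    ⟨c, fun z hz => ⟨hPc (hc z hz), (hbelow z (hPc (hc z hz))).mpr (hc z hz)⟩, hceq⟩
  have huniq : ∀ A' ⊆ st.1,
      HomBelow L f (f t) (∑ x ∈ A', canCycle L f x) (col L t) → A' = A := by
    rintro A' hA' ⟨c', hc', hceq'⟩
    have hsub : (A' \ A ∪ A \ A') ⊆ st.1 := by
      intro x hx
      rcases Finset.mem_union.mp hx with h | h
      · exact hA' (Finset.mem_sdiff.mp h).1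
      · exact hAsub (Finset.mem_sdiff.mp h).1
    have hsd : (A' \ A ∪ A \ A') = ∅ := by
      refine inv.ind _ hsub ⟨c' + c, fun z hz => ?_, ?_⟩
      · by_cases h1 : c' z = 0
        · have h2 : c z ≠ 0 := fun h => hz (by rw [Pi.add_apply, h1, h, add_zero])
          exact hc z h2
        · exact (hbelow z (hc' z h1).1).mp (hc' z h1).2
      · rw [map_add, hceq', hceq, sum_symmdiff_zmod2 pi_add_self]
        have hx : (∑ x ∈ A', canCycle L f x) + col L t
              + ((∑ x ∈ A, canCycle L f x) + col L t)
            = ((∑ x ∈ A', canCycle L f x) + (∑ x ∈ A, canCycle L f x))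
              + (col L t + col L t) := by abel
        rw [hx, pi_add_self, add_zero]
    exact symmdiff_eq_empty hsd
  have hexu : ∃! A' : Finset C, A' ⊆ st.1 ∧
      HomBelow L f (f t) (∑ x ∈ A', canCycle L f x) (col L t) :=
    ⟨A, ⟨hAsub, hHom⟩, fun A' h' => huniq A' h'.1 h'.2⟩
  have hchoice : (if h : ∃! A' : Finset C, A' ⊆ st.1 ∧
      HomBelow L f (f t) (∑ x ∈ A', canCycle L f x) (col L t)
      then h.exists.choose else ∅) = A := by
    rw [dif_pos hexu]
    exact huniq _ hexu.exists.choose_spec.1 hexu.exists.choose_spec.2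
  have hps : pairStep L f st t =
      (st.1.erase (maxCellD f A t), insert (maxCellD f A t, t) st.2) := by
    rw [pairStep, if_neg hnb]
    simp only []
    rw [hchoice]
  set s := maxCellD f A t with hsdef
  have hsspec : s ∈ A ∧ ∀ x ∈ A, f x ≤ f s := by
    rw [hsdef, maxCellD, dif_pos hAne]
    exact ⟨(Finset.exists_max_image A f hAne).choose_spec.1,
           (Finset.exists_max_image A f hAne).choose_spec.2⟩
  have hsA : s ∈ A := hsspec.1
  have hsQ : s ∈ Q.cells := (Finset.mem_filter.mp hsA).1
  have hslt : f s < f t := (hAfacts s hsA).1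
  have hsbirth : givesBirth L f s := (hAfacts s hsA).2
  have hsst1 : s ∈ st.1 := hAsub hsA
  have hsP : s ∈ P := hst1P hsst1
  have hbd1 : Q.bd s t = 1 := zmod2_eq_one (Finset.mem_filter.mp hsA).2
  have hfacet : ∀ x, Q.bd x t ≠ 0 → f x ≤ f s := by
    intro x hx
    exact hsspec.2 x (Finset.mem_filter.mpr ⟨(Q.bd_mem x t hx).1, hx⟩)
  have hcofacet : ∀ y', Q.bd s y' ≠ 0 → f t ≤ f y' := by
    intro y' hbdy
    by_contra hlt
    push_neg at hlt
    have hy'Q : y' ∈ Q.cells := (Q.bd_mem s y' hbdy).2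
    have hy'c : y' ∈ L.cells := by
      rw [inv.qcells] at hy'Q
      exact (Finset.mem_sdiff.mp hy'Q).1
    exact hbdy (inv.colzero y' hy'Q ((hbelow y' hy'c).mp hlt) s)
  have hshallow : IsShallow Q f s t := ⟨hbd1, hfacet, hcofacet⟩
  refine ⟨π ++ [(s, t)], ?_⟩
  rw [hps]
  have hQ' : cancelList L (π ++ [(s, t)]) = cancel Q s t := by
    rw [cancelList_append]
    rfl
  have hQ'cells : (cancel Q s t).cells = Q.cells \ {s, t} := cancel_cells Q hbd1
  have hQ'bd : (cancel Q s t).bd = cancelBd Q s t := cancel_bd Q hbd1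
  have hstne : s ≠ t := fun h => lt_irrefl _ (h ▸ hslt)
  refine { pairs_eq := ?_, st1_eq := ?_, snds_mem := ?_, fsts_mem := ?_,
           snds_all := ?_, sorted_snds := ?_, ind := ?_, span := ?_,
           qcells := ?_, qfilt := ?_, colzero := ?_, rep := ?_, shallow := ?_ }
  · -- pairs_eq
    ext p
    simp [inv.pairs_eq, or_comm]
  · -- st1_eq
    ext x
    constructor
    · intro hx
      obtain ⟨hxs, hx1⟩ := Finset.mem_erase.mp hx
      rw [inv.st1_eq] at hx1
      obtain ⟨hx2, hx3⟩ := Finset.mem_sdiff.mp hx1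
      obtain ⟨hxP, hxb⟩ := Finset.mem_filter.mp hx2
      refine Finset.mem_sdiff.mpr
        ⟨Finset.mem_filter.mpr ⟨Finset.mem_insert_of_mem hxP, hxb⟩, ?_⟩
      rw [List.map_append, List.toFinset_append, Finset.mem_union]
      rintro (h | h)
      · exact hx3 h
      · simp at h
        exact hxs h
    · intro hx
      obtain ⟨hx2, hx3⟩ := Finset.mem_sdiff.mp hx
      obtain ⟨hxtP, hxb⟩ := Finset.mem_filter.mp hx2
      rw [List.map_append, List.toFinset_append, Finset.mem_union] at hx3
      push_neg at hx3
      have hxs : x ≠ s := fun h => hx3.2 (by simp [h])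
      have hxP : x ∈ P := by
        rcases Finset.mem_insert.mp hxtP with rfl | h
        · exact absurd hxb hnb
        · exact h
      refine Finset.mem_erase.mpr ⟨hxs, ?_⟩
      rw [inv.st1_eq]
      exact Finset.mem_sdiff.mpr ⟨Finset.mem_filter.mpr ⟨hxP, hxb⟩, hx3.1⟩
  · -- snds_mem
    intro p hp
    rcases List.mem_append.mp hp with h | h
    · exact ⟨Finset.mem_insert_of_mem (inv.snds_mem p h).1, (inv.snds_mem p h).2⟩
    · simp at h
      subst h
      exact ⟨Finset.mem_insert_self t P, hd⟩
  · -- fsts_mem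
    intro p hp
    rcases List.mem_append.mp hp with h | h
    · exact ⟨Finset.mem_insert_of_mem (inv.fsts_mem p h).1,
        (inv.fsts_mem p h).2.1, (inv.fsts_mem p h).2.2⟩
    · simp at h
      subst h
      exact ⟨Finset.mem_insert_of_mem hsP, hsbirth, hslt⟩
  · -- snds_all
    intro z hz hdz
    rw [List.map_append]
    rcases Finset.mem_insert.mp hz with rfl | h
    · refine List.mem_append_right _ ?_
      simp
    · exact List.mem_append_left _ (inv.snds_all z h hdz)
  · -- sorted_snds
    rw [List.pairwise_append]
    refine ⟨inv.sorted_snds, by simp, ?_⟩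
    intro p hp q hq
    simp at hq
    subst hq
    have hpP := (inv.snds_mem p hp).1
    exact (hbelow p.2 (hPc hpP)).mpr hpP
  · -- ind
    rintro A' hA' ⟨c', hc', hceq'⟩
    by_cases hct : c' t = 0
    · refine inv.ind A' (Finset.Subset.trans hA' (Finset.erase_subset s st.1))
        ⟨c', fun z hz => ?_, hceq'⟩
      rcases Finset.mem_insert.mp (hc' z hz) with rfl | h
      · exact absurd hct hz
      · exact h
    · exfalso
      have hct1 := zmod2_eq_one hct
      have hdecomp : c' = Function.update c' t 0 + Pi.single t 1 := by
        funext z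
        by_cases hzt : z = t
        · subst hzt
          rw [Pi.add_apply, Function.update_self, Pi.single_eq_same, zero_add, hct1]
        · rw [Pi.add_apply, Function.update_of_ne hzt, Pi.single_eq_of_ne hzt, add_zero]
      have hup : bdOp L (Function.update c' t 0) =
          (∑ x ∈ A', canCycle L f x) + col L t := by
        have h1 : bdOp L c' = bdOp L (Function.update c' t 0) + col L t := by
          conv_lhs => rw [hdecomp]
          rw [map_add, bdOp_single]
        rw [← hceq', h1, add_assoc, pi_add_self, add_zero]
      have hsupp' : ∀ z, Function.update c' t 0 z ≠ 0 → z ∈ L.cells ∧ f z < f t := by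
        intro z hz
        have hzt : z ≠ t := fun h => hz (by rw [h, Function.update_self])
        have hcz : c' z ≠ 0 := by rwa [Function.update_of_ne hzt] at hz
        have hzP : z ∈ P := by
          rcases Finset.mem_insert.mp (hc' z hcz) with rfl | h
          · exact absurd rfl hzt
          · exact h
        exact ⟨hPc hzP, (hbelow z (hPc hzP)).mpr hzP⟩
      have hA'A : A' = A := huniq A' (Finset.Subset.trans hA' (Finset.erase_subset s st.1))
        ⟨Function.update c' t 0, hsupp', hup⟩
      have hsmem : s ∈ st.1.erase s := hA' (hA'A ▸ hsA)
      exact (Finset.mem_erase.mp hsmem).1 rfl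
  · -- span
    intro v hv hbv
    by_cases hvt : v t = 0
    · have hvP : ∀ z, v z ≠ 0 → z ∈ P := by
        intro z hz
        rcases Finset.mem_insert.mp (hv z hz) with rfl | h
        · exact absurd hvt hz
        · exact h
      obtain ⟨A'', hA'', c'', hc'', heq''⟩ := inv.span v hvP hbv
      by_cases hsA'' : s ∈ A''
      · refine ⟨A'' \ A ∪ A \ A'', ?_, c'' + c + Pi.single t 1, ?_, ?_⟩
        · intro x hx
          rcases Finset.mem_union.mp hx with h | h
          · exact Finset.mem_erase.mpr
              ⟨fun heq => (Finset.mem_sdiff.mp h).2 (heq ▸ hsA),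
               hA'' (Finset.mem_sdiff.mp h).1⟩
          · exact Finset.mem_erase.mpr
              ⟨fun heq => (Finset.mem_sdiff.mp h).2 (heq ▸ hsA''),
               hAsub (Finset.mem_sdiff.mp h).1⟩
        · intro z hz
          by_cases h1 : c'' z ≠ 0
          · exact Finset.mem_insert_of_mem (hc'' z h1)
          · by_cases h2 : c z ≠ 0
            · exact Finset.mem_insert_of_mem (hc z h2)
            · push_neg at h1 h2
              have h3 : (Pi.single t 1 : C → ZMod 2) z ≠ 0 := fun h => hz
                (by rw [Pi.add_apply, Pi.add_apply, h1, h2, h, add_zero, add_zero])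
              have hzt : z = t := by
                by_contra hne
                exact h3 (Pi.single_eq_of_ne hne 1)
              exact hzt ▸ Finset.mem_insert_self t P
        · rw [map_add, map_add, heq'', hceq, bdOp_single,
            sum_symmdiff_zmod2 pi_add_self]
          have hx : v + (∑ x ∈ A'', canCycle L f x)
                + ((∑ x ∈ A, canCycle L f x) + col L t) + col L t
              = (v + ((∑ x ∈ A'', canCycle L f x) + (∑ x ∈ A, canCycle L f x)))
                + (col L t + col L t) := by abel
          rw [hx, pi_add_self, add_zero]
      · exact ⟨A'', fun x hx => Finset.mem_erase.mpr ⟨fun h => hsA'' (h ▸ hx), hA'' hx⟩,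
          c'', fun z hz => Finset.mem_insert_of_mem (hc'' z hz), heq''⟩
    · exfalso
      have hvt1 := zmod2_eq_one hvt
      have hdecomp : v = Function.update v t 0 + Pi.single t 1 := by
        funext z
        by_cases hzt : z = t
        · subst hzt
          rw [Pi.add_apply, Function.update_self, Pi.single_eq_same, zero_add, hvt1]
        · rw [Pi.add_apply, Function.update_of_ne hzt, Pi.single_eq_of_ne hzt, add_zero]
      have h2 : (0 : C → ZMod 2) = bdOp L (Function.update v t 0) + col L t := by
        rw [← hbv]
        conv_lhs => rw [hdecomp]
        rw [map_add, bdOp_single]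
      have h1 : bdOp L (Function.update v t 0) = col L t := by
        have h3 : bdOp L (Function.update v t 0) + (col L t + col L t) = col L t := by
          rw [← add_assoc, ← h2, zero_add]
        rwa [pi_add_self, add_zero] at h3
      apply hd.2
      refine ⟨Function.update v t 0, fun z hz => ?_, h1⟩
      have hzt : z ≠ t := fun h => hz (by rw [h, Function.update_self])
      have hvz : v z ≠ 0 := by rwa [Function.update_of_ne hzt] at hz
      have hzP : z ∈ P := by
        rcases Finset.mem_insert.mp (hv z hvz) with rfl | h
        · exact absurd rfl hzt
        · exact h
      exact ⟨hPc hzP, (hbelow z (hPc hzP)).mpr hzP⟩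
  · -- qcells
    rw [hQ', hQ'cells, inv.qcells]
    ext x
    simp only [removedOf, Finset.mem_sdiff, Finset.mem_union, List.map_append,
      List.toFinset_append, List.mem_toFinset, Finset.mem_insert, Finset.mem_singleton,
      List.map_cons, List.map_nil, List.toFinset_cons, List.toFinset_nil,
      insert_empty_eq, List.mem_singleton]
    tauto
  · -- qfilt
    intro x y' hbd
    rw [hQ', hQ'bd] at hbd
    unfold cancelBd at hbd
    split_ifs at hbd with hcond
    · by_cases h1 : Q.bd x y' = 0
      · rw [h1, zero_add] at hbd
        have h2 : Q.bd s y' ≠ 0 := fun h => hbd (by rw [h, zero_mul])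
        have h3 : Q.bd x t ≠ 0 := fun h => hbd (by rw [h, mul_zero])
        calc f x ≤ f s := hfacet x h3
          _ < f t := hslt
          _ ≤ f y' := hcofacet y' h2
      · exact inv.qfilt x y' h1
    · exact absurd rfl hbd
  · -- colzero
    intro y' hy'Q hy'P x
    rw [hQ', hQ'cells] at hy'Q
    rw [hQ', hQ'bd]
    obtain ⟨hy'Q2, hy'ns⟩ := Finset.mem_sdiff.mp hy'Q
    have hy'P2 : y' ∈ P := by
      rcases Finset.mem_insert.mp hy'P with heq | h
      · exfalso
        apply hy'ns
        rw [heq]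
        exact Finset.mem_insert_of_mem (Finset.mem_singleton_self t)
      · exact h
    have h0 := inv.colzero y' hy'Q2 hy'P2
    unfold cancelBd
    split_ifs with hcond
    · rw [h0 x, h0 s, zero_mul, add_zero]
    · rfl
  · -- rep
    rw [hQ', hQ'cells, hQ'bd]
    intro y' hy'Q'
    obtain ⟨hy'Q, hy'ns⟩ := Finset.mem_sdiff.mp hy'Q'
    obtain ⟨e', he'1, he'2, he'3, he'4⟩ := inv.rep y' hy'Q
    have hy'c : y' ∈ L.cells := by
      rw [inv.qcells] at hy'Q
      exact (Finset.mem_sdiff.mp hy'Q).1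
    have hy'ne_t : y' ≠ t := by
      intro h
      apply hy'ns
      rw [h]
      exact Finset.mem_insert_of_mem (Finset.mem_singleton_self t)
    have hy'ne_s : y' ≠ s := by
      intro h
      apply hy'ns
      rw [h]
      exact Finset.mem_insert_self s {t}
    set ε := Q.bd s y' with hε
    have hεlt : ε ≠ 0 → f t < f y' := by
      intro hne
      have hle := hcofacet y' hne
      exact lt_of_le_of_ne hle fun h => hy'ne_t (hf.1 t ht y' hy'c h).symm
    refine ⟨e' + ε • e, ?_, ?_, ?_, ?_⟩
    · have he_y' : e y' = 0 := by
        by_contra h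
        rcases he2 y' h with rfl | ⟨hsnd', _⟩
        · exact hy'ne_t rfl
        · have hrm : y' ∈ removedOf π :=
            Finset.mem_union_right _ (List.mem_toFinset.mpr hsnd')
          rw [inv.qcells] at hy'Q
          exact (Finset.mem_sdiff.mp hy'Q).2 hrm
      rw [Pi.add_apply, he'1, Pi.smul_apply, he_y', smul_zero, add_zero]
    · intro z hz
      by_cases h1 : e' z ≠ 0
      · rcases he'2 z h1 with rfl | ⟨hzs, hlt⟩
        · exact Or.inl rfl
        · exact Or.inr ⟨by rw [List.map_append]; exact List.mem_append_left _ hzs, hlt⟩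
      · push_neg at h1
        have h2 : (ε • e) z ≠ 0 := fun h => hz (by rw [Pi.add_apply, h1, h, add_zero])
        rw [Pi.smul_apply, smul_eq_mul] at h2
        have hεne : ε ≠ 0 := fun h => h2 (by rw [h, zero_mul])
        have hez : e z ≠ 0 := fun h => h2 (by rw [h, mul_zero])
        have hty' := hεlt hεne
        rcases he2 z hez with rfl | ⟨hzs, hlt⟩
        · refine Or.inr ⟨?_, hty'⟩
          rw [List.map_append]
          refine List.mem_append_right _ ?_
          simp
        · exact Or.inr ⟨by rw [List.map_append]; exact List.mem_append_left _ hzs,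
            lt_trans hlt hty'⟩
    · intro x hx
      rw [List.map_append] at hx
      rcases List.mem_append.mp hx with h | h
      · rw [map_add, Pi.add_apply, he'3 x h, map_smul, Pi.smul_apply, he3 x h,
          smul_zero, add_zero]
      · simp at h
        subst h
        have h1 : bdOp L e' s = ε := by rw [← he'4 s hsQ]
        have h2 : bdOp L e s = 1 := by rw [← he4 s hsQ]; exact hbd1
        rw [map_add, Pi.add_apply, h1, map_smul, Pi.smul_apply, h2, smul_eq_mul, mul_one]
        exact zmod2_add_self ε
    · intro x hx
      obtain ⟨hxQ, hxns⟩ := Finset.mem_sdiff.mp hx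
      unfold cancelBd
      rw [if_pos ⟨Finset.mem_sdiff.mpr ⟨hxQ, hxns⟩, Finset.mem_sdiff.mpr ⟨hy'Q, hy'ns⟩⟩]
      rw [map_add, Pi.add_apply, ← he'4 x hxQ, map_smul, Pi.smul_apply, ← he4 x hxQ,
        smul_eq_mul, hε]
  · -- shallow
    intro k hk
    have hklen : k < π.length + 1 := by simpa using hk
    by_cases hklt : k < π.length
    · have h1 : (π ++ [(s, t)]).take k = π.take k :=
        List.take_append_of_le_length (le_of_lt hklt)
      have h2 : (π ++ [(s, t)]).get ⟨k, hk⟩ = π.get ⟨k, hklt⟩ := by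
        rw [List.get_eq_getElem, List.get_eq_getElem]
        exact List.getElem_append_left hklt
      rw [h1, h2]
      exact inv.shallow k hklt
    · have hkeq : k = π.length := by omega
      subst hkeq
      have h1 : (π ++ [(s, t)]).take π.length = π := List.take_left
      have h2 : (π ++ [(s, t)]).get ⟨π.length, hk⟩ = (s, t) := by
        rw [List.get_eq_getElem]
        exact List.getElem_concat_length rfl _
      rw [h1, h2]
      exact hshallow

lemma fold_inv (L : LC C) (f : C → ℝ) (hf : IsFilter L f) :
    ∀ (l done : List C), sortedCells L f = done ++ l →
      (∃ π, PInv L f done.toFinset (done.foldl (pairStep L f) (∅, ∅)) π) →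
      ∃ π, PInv L f (done ++ l).toFinset ((done ++ l).foldl (pairStep L f) (∅, ∅)) π := by
  intro l
  induction l with
  | nil => intro done _ h; simpa using h
  | cons y rest ih =>
    intro done hdec hinv
    obtain ⟨π, hπ⟩ := hinv
    obtain ⟨hyc, hynd, hdc, hbel⟩ := prefix_facts L f hf hdec
    have hstep : ∃ π', PInv L f (insert y done.toFinset)
        (pairStep L f (done.foldl (pairStep L f) (∅, ∅)) y) π' := by
      rcases birth_or_death L f hyc with hb | hd
      · exact ⟨π, step_birth L f hf hπ hdc hyc hynd hbel hb⟩
      · exact step_death L f hf hπ hdc hyc hynd hbel hd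
    have hdec' : sortedCells L f = (done ++ [y]) ++ rest := by rw [hdec]; simp
    have hpre : ∃ π', PInv L f (done ++ [y]).toFinset
        ((done ++ [y]).foldl (pairStep L f) (∅, ∅)) π' := by
      obtain ⟨π', hπ'⟩ := hstep
      refine ⟨π', ?_⟩
      have ht : (done ++ [y]).toFinset = insert y done.toFinset := by
        rw [List.toFinset_append]
        ext a
        simp [or_comm]
      have hf2 : (done ++ [y]).foldl (pairStep L f) (∅, ∅)
          = pairStep L f (done.foldl (pairStep L f) (∅, ∅)) y := by
        rw [List.foldl_append]
        rfl
      rw [ht, hf2]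
      exact hπ'
    have h2 := ih (done ++ [y]) hdec' hpre
    have heq : (done ++ [y]) ++ rest = done ++ y :: rest := by simp
    rwa [heq] at h2

lemma final_inv (L : LC C) (f : C → ℝ) (hf : IsFilter L f) :
    ∃ π, PInv L f L.cells (pairState L f) π := by
  have h := fold_inv L f hf (sortedCells L f) [] rfl ⟨[], pinv_nil L f hf⟩
  rw [List.nil_append, (sortedCells_spec L f hf).1] at h
  exact h


end OmegaAux

/-- The bijection `Ω` ordering the birth-death pairs by
strictly increasing filter value of their death-giving cells is a shallow
order of `f`. -/
theorem omega_is_shallow_order (L : LC C) (f : C → ℝ) (hf : IsFilter L f)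
    (O : Fin (BD L f).card → C × C)
    (hinj : Function.Injective O) (hmem : ∀ i, O i ∈ BD L f)
    (hord : ∀ i j : Fin (BD L f).card, i < j → f (O i).2 < f (O j).2) :
    IsShallowOrder L f O := by
  obtain ⟨π, inv⟩ := final_inv L f hf
  have hBD : BD L f = π.toFinset := by rw [BD]; exact inv.pairs_eq
  have hπsorted : π.Pairwise (fun p q => f p.2 < f q.2) := inv.sorted_snds
  have hπnodup : π.Nodup :=
    hπsorted.imp fun h heq => absurd (heq ▸ h) (lt_irrefl _)
  have hlOsorted : (List.ofFn O).Pairwise (fun p q => f p.2 < f q.2) := by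
    rw [List.pairwise_ofFn]
    intro i j hij
    exact hord i j hij
  have hlOnodup : (List.ofFn O).Nodup :=
    hlOsorted.imp fun h heq => absurd (heq ▸ h) (lt_irrefl _)
  have htfsub : (List.ofFn O).toFinset ⊆ BD L f := by
    intro p hp
    rw [List.mem_toFinset, List.mem_ofFn] at hp
    obtain ⟨i, rfl⟩ := hp
    exact hmem i
  have htfeq : (List.ofFn O).toFinset = BD L f :=
    Finset.eq_of_subset_of_card_le htfsub
      (by rw [List.toFinset_card_of_nodup hlOnodup, List.length_ofFn])
  have hperm : (List.ofFn O).Perm π := by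
    apply List.perm_of_nodup_nodup_toFinset_eq hlOnodup hπnodup
    rw [htfeq, hBD]
  haveI : Std.Antisymm (fun (p q : C × C) => f p.2 < f q.2) :=
    ⟨fun a b h1 h2 => absurd (lt_trans h1 h2) (lt_irrefl _)⟩
  have heqlist : List.ofFn O = π := List.Perm.eq_of_pairwise' hlOsorted hπsorted hperm
  subst heqlist
  refine ⟨hinj, hmem, ?_⟩
  intro i
  have hi : (i : ℕ) < (List.ofFn O).length := by
    rw [List.length_ofFn]
    exact i.isLt
  have hshallow := inv.shallow i hi
  have hget : (List.ofFn O).get ⟨i, hi⟩ = O i := by simp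
  rw [hget] at hshallow
  show IsShallow (cancelList L ((List.ofFn O).take i)) f (O i).1 (O i).2
  exact hshallow
end
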